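/- arXiv:1905.10068 — 9 statements merged into one kernel-verified Lean document; each statement's English description precedes it below -/
import Mathlib

section
/- Let R be an integral domain, let B be an integral domain containing R, and let D be a nontrivial locally finite iterative higher R-derivation (lfihd) on B. If D has a slice s ∈ B, then B is generated as a B^D-algebra by s (i.e. B = B^D[s]) and s is transcendental over B^D. -/
open MvPolynomial

/-- A higher `R`-derivation on `B`: a family of `R`-linear maps `D ℓ : B → B`
with `D 0 = id` and the Leibniz rule `D ℓ (a*b) = ∑_{i+j=ℓ} D i a * D j b`. -/
structure HigherDerivation (R B : Type*) [CommRing R] [CommRing B] [Algebra R B] where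
  D : ℕ → B →ₗ[R] B
  D_zero : D 0 = LinearMap.id
  leibniz : ∀ (ℓ : ℕ) (a b : B),
    D ℓ (a * b) = ∑ ij ∈ Finset.HasAntidiagonal.antidiagonal ℓ, D ij.1 a * D ij.2 b

namespace HigherDerivation

variable {R B : Type*} [CommRing R] [CommRing B] [Algebra R B]

/-- The kernel `B^D = ⋂_{ℓ ≥ 1} ker D_ℓ` of a higher derivation. -/
def kerSet (hd : HigherDerivation R B) : Set B :=
  {b | ∀ ℓ : ℕ, 1 ≤ ℓ → hd.D ℓ b = 0}

/-- `D` is locally finite. -/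
def LocallyFinite (hd : HigherDerivation R B) : Prop :=
  ∀ b : B, ∃ N : ℕ, ∀ ℓ : ℕ, N ≤ ℓ → hd.D ℓ b = 0

/-- `D` is iterative: `D_i ∘ D_j = binom(i+j, j) • D_{i+j}`. -/
def Iterative (hd : HigherDerivation R B) : Prop :=
  ∀ (i j : ℕ) (b : B), hd.D i (hd.D j b) = (i + j).choose j • hd.D (i + j) b

/-- `s` is a slice of `D`: the `t`-degree `N ≥ 1` of `φ_D(s)` is minimal among the
`t`-degrees of `φ_D(b)` for `b ∉ B^D`, and the leading `t`-coefficient `D N s` of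
`φ_D(s)` is a unit of `B` (in particular `s ∉ B^D`). -/
def IsSlice (hd : HigherDerivation R B) (s : B) : Prop :=
  ∃ N : ℕ, 1 ≤ N ∧ hd.D N s ≠ 0 ∧ (∀ ℓ : ℕ, N < ℓ → hd.D ℓ s = 0) ∧
    IsUnit (hd.D N s) ∧ ∀ b : B, b ∉ hd.kerSet → ∃ m : ℕ, N ≤ m ∧ hd.D m b ≠ 0

end HigherDerivation

/-! ### Auxiliary number-theoretic lemmas (Lucas' theorem consequences) -/

theorem myLucas_step {p : ℕ} (hp : p.Prime) (n k : ℕ) :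
    Nat.choose n k ≡ Nat.choose (n % p) (k % p) * Nat.choose (n / p) (k / p) [MOD p] := by
  haveI : Fact p.Prime := ⟨hp⟩
  exact Choose.choose_modEq_choose_mod_mul_choose_div_nat

theorem myModEq_not_dvd {p a b : ℕ} (h : a ≡ b [MOD p]) (hb : ¬ p ∣ b) : ¬ p ∣ a :=
  fun ha => hb (Nat.modEq_zero_iff_dvd.mp (h.symm.trans (Nat.modEq_zero_iff_dvd.mpr ha)))

theorem myLucas_pow {p : ℕ} (hp : p.Prime) :
    ∀ (e m : ℕ), p ^ e ∣ m → ¬ p ∣ m / p ^ e → ¬ p ∣ m.choose (p ^ e) := by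
  intro e
  induction e with
  | zero =>
    intro m _ h2
    simpa using h2
  | succ e ih =>
    intro m hdvd hnd
    have hstep := myLucas_step hp m (p ^ (e + 1))
    have h1 : p ^ (e + 1) % p = 0 := by
      rw [pow_succ]; exact Nat.mul_mod_left _ _
    have h2 : p ^ (e + 1) / p = p ^ e := by
      rw [pow_succ]; exact Nat.mul_div_cancel _ hp.pos
    rw [h1, h2, Nat.choose_zero_right, one_mul] at hstep
    have hpm : p ∣ m := dvd_trans (dvd_pow_self p (Nat.succ_ne_zero e)) hdvd
    have hdvd' : p ^ e ∣ m / p := by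
      rw [Nat.dvd_div_iff_mul_dvd hpm, mul_comm, ← pow_succ]
      exact hdvd
    have hnd' : ¬ p ∣ (m / p) / p ^ e := by
      rw [Nat.div_div_eq_div_mul, ← pow_succ']
      exact hnd
    exact myModEq_not_dvd hstep (ih (m / p) hdvd' hnd')

theorem myLucas_mod {p : ℕ} (hp : p.Prime) :
    ∀ (e d : ℕ), ¬ p ∣ d.choose (d % p ^ e) := by
  intro e
  induction e with
  | zero =>
    intro d
    rw [pow_zero, Nat.mod_one, Nat.choose_zero_right, Nat.dvd_one]
    exact hp.one_lt.ne'
  | succ e ih =>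
    intro d
    have hstep := myLucas_step hp d (d % p ^ (e + 1))
    have h1 : d % p ^ (e + 1) % p = d % p :=
      Nat.mod_mod_of_dvd d (dvd_pow_self p (Nat.succ_ne_zero e))
    have h2 : d % p ^ (e + 1) / p = (d / p) % p ^ e := by
      rw [← Nat.mod_mul_right_div_self, ← pow_succ']
    rw [h1, h2, Nat.choose_self, one_mul] at hstep
    exact myModEq_not_dvd hstep (ih (d / p))

/-! ### Auxiliary lemmas on higher derivations -/

namespace HigherDerivation

variable {R B : Type*} [CommRing R] [CommRing B] [Algebra R B]

theorem myD0 (hd : HigherDerivation R B) (b : B) : hd.D 0 b = b := by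
  rw [hd.D_zero]; rfl

theorem ker_zero (hd : HigherDerivation R B) : (0 : B) ∈ hd.kerSet :=
  fun ℓ _ => map_zero _

theorem ker_add (hd : HigherDerivation R B) {a b : B} (ha : a ∈ hd.kerSet)
    (hb : b ∈ hd.kerSet) : a + b ∈ hd.kerSet := fun ℓ hℓ => by
  rw [map_add, ha ℓ hℓ, hb ℓ hℓ, add_zero]

theorem D_one (hd : HigherDerivation R B) : ∀ ℓ : ℕ, 1 ≤ ℓ → hd.D ℓ (1 : B) = 0 := by
  intro ℓ
  induction ℓ using Nat.strong_induction_on with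
  | _ ℓ ih =>
    intro hℓ
    classical
    have h := hd.leibniz ℓ 1 1
    rw [one_mul] at h
    have hmem : ((0 : ℕ), ℓ) ∈ Finset.HasAntidiagonal.antidiagonal ℓ :=
      Finset.HasAntidiagonal.mem_antidiagonal.mpr (zero_add ℓ)
    have hmem2 : ((ℓ : ℕ), 0) ∈ (Finset.HasAntidiagonal.antidiagonal ℓ).erase (0, ℓ) := by
      refine Finset.mem_erase.mpr ⟨?_, Finset.HasAntidiagonal.mem_antidiagonal.mpr (add_zero ℓ)⟩
      intro hc
      have := congrArg Prod.fst hc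
      simp only at this
      omega
    rw [← Finset.add_sum_erase _ _ hmem, ← Finset.add_sum_erase _ _ hmem2] at h
    have hrest : ∑ ij ∈ ((Finset.HasAntidiagonal.antidiagonal ℓ).erase (0, ℓ)).erase (ℓ, 0),
        hd.D ij.1 (1 : B) * hd.D ij.2 (1 : B) = 0 := by
      apply Finset.sum_eq_zero
      intro ij hij
      have h1 := Finset.mem_erase.mp hij
      have h2 := Finset.mem_erase.mp h1.2
      have hsum : ij.1 + ij.2 = ℓ := Finset.HasAntidiagonal.mem_antidiagonal.mp h2.2
      have hij1 : ij.1 ≠ 0 := by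
        intro hc
        exact h2.1 (Prod.ext_iff.mpr ⟨hc, by omega⟩)
      have hij2 : ij.1 ≠ ℓ := by
        intro hc
        exact h1.1 (Prod.ext_iff.mpr ⟨hc, by omega⟩)
      rw [ih ij.1 (by omega) (by omega), zero_mul]
    rw [hrest, add_zero, myD0, one_mul, mul_one] at h
    -- h : hd.D ℓ 1 = hd.D ℓ 1 + hd.D ℓ 1
    have : hd.D ℓ (1 : B) + hd.D ℓ (1 : B) = hd.D ℓ (1 : B) + 0 := by
      rw [add_zero]; exact h.symm
    exact add_left_cancel this

theorem D_mul_ker (hd : HigherDerivation R B) (ℓ : ℕ) {a : B} (ha : a ∈ hd.kerSet)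
    (b : B) : hd.D ℓ (a * b) = a * hd.D ℓ b := by
  rw [hd.leibniz]
  have := Finset.sum_eq_single_of_mem (s := Finset.HasAntidiagonal.antidiagonal ℓ)
    (f := fun ij : ℕ × ℕ => hd.D ij.1 a * hd.D ij.2 b) ((0 : ℕ), ℓ)
    (Finset.HasAntidiagonal.mem_antidiagonal.mpr (zero_add ℓ)) ?_
  · rw [this]; dsimp only; rw [myD0]
  · intro ij hij hne
    have hsum : ij.1 + ij.2 = ℓ := Finset.HasAntidiagonal.mem_antidiagonal.mp hij
    have hij1 : 1 ≤ ij.1 := by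
      rcases Nat.eq_zero_or_pos ij.1 with h | h
      · exact absurd (Prod.ext_iff.mpr ⟨h, by omega⟩) hne
      · exact h
    rw [ha ij.1 hij1, zero_mul]

theorem ker_one (hd : HigherDerivation R B) : (1 : B) ∈ hd.kerSet :=
  fun ℓ hℓ => D_one hd ℓ hℓ

theorem ker_mul (hd : HigherDerivation R B) {a b : B} (ha : a ∈ hd.kerSet)
    (hb : b ∈ hd.kerSet) : a * b ∈ hd.kerSet := fun ℓ hℓ => by
  rw [D_mul_ker hd ℓ ha b, hb ℓ hℓ, mul_zero]

theorem ker_pow (hd : HigherDerivation R B) {a : B} (ha : a ∈ hd.kerSet) (k : ℕ) :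
    a ^ k ∈ hd.kerSet := by
  induction k with
  | zero => rw [pow_zero]; exact ker_one hd
  | succ k ih => rw [pow_succ]; exact ker_mul hd ih ha

theorem ker_inv (hd : HigherDerivation R B) [NoZeroDivisors B] {u v : B}
    (hu : u ∈ hd.kerSet) (huv : u * v = 1) (hu0 : u ≠ 0) : v ∈ hd.kerSet := by
  intro ℓ hℓ
  have h1 : hd.D ℓ (u * v) = u * hd.D ℓ v := D_mul_ker hd ℓ hu v
  rw [huv, D_one hd ℓ hℓ] at h1
  exact (mul_eq_zero.mp h1.symm).resolve_left hu0

theorem topcoeff_mem_ker (hd : HigherDerivation R B) (hit : hd.Iterative) {b : B} {d : ℕ}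
    (h : ∀ ℓ : ℕ, d < ℓ → hd.D ℓ b = 0) : hd.D d b ∈ hd.kerSet := by
  intro ℓ hℓ
  rw [hit ℓ d b, h (ℓ + d) (by omega), smul_zero]

theorem spow (hd : HigherDerivation R B) {s : B} {N : ℕ}
    (htop : ∀ ℓ : ℕ, N < ℓ → hd.D ℓ s = 0) :
    ∀ k : ℕ, (∀ ℓ : ℕ, N * k < ℓ → hd.D ℓ (s ^ k) = 0) ∧
      hd.D (N * k) (s ^ k) = (hd.D N s) ^ k := by
  intro k
  induction k with
  | zero =>
    constructor
    · intro ℓ hℓ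
      rw [Nat.mul_zero] at hℓ
      rw [pow_zero]
      exact D_one hd ℓ (by omega)
    · rw [Nat.mul_zero, pow_zero, pow_zero, myD0]
  | succ k ih =>
    have hNk : N * (k + 1) = N * k + N := by ring
    have hmul : ∀ ℓ : ℕ, hd.D ℓ (s ^ (k + 1)) =
        ∑ ij ∈ Finset.HasAntidiagonal.antidiagonal ℓ, hd.D ij.1 (s ^ k) * hd.D ij.2 s := by
      intro ℓ; rw [pow_succ, hd.leibniz]
    constructor
    · intro ℓ hℓ
      rw [hmul]
      apply Finset.sum_eq_zero
      intro ij hij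
      have hsum : ij.1 + ij.2 = ℓ := Finset.HasAntidiagonal.mem_antidiagonal.mp hij
      by_cases h1 : N * k < ij.1
      · rw [ih.1 ij.1 h1, zero_mul]
      · have : N < ij.2 := by omega
        rw [htop ij.2 this, mul_zero]
    · rw [hmul]
      have hsingle := Finset.sum_eq_single_of_mem (s := Finset.HasAntidiagonal.antidiagonal (N * (k + 1)))
        (f := fun ij : ℕ × ℕ => hd.D ij.1 (s ^ k) * hd.D ij.2 s) ((N * k), N)
        (Finset.HasAntidiagonal.mem_antidiagonal.mpr (by omega)) ?_
      · rw [hsingle]; dsimp only; rw [ih.2, pow_succ]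
      · intro ij hij hne
        have hsum : ij.1 + ij.2 = N * (k + 1) := Finset.HasAntidiagonal.mem_antidiagonal.mp hij
        rcases lt_trichotomy ij.1 (N * k) with h | h | h
        · have : N < ij.2 := by omega
          rw [htop ij.2 this, mul_zero]
        · exact absurd (Prod.ext_iff.mpr ⟨h, by omega⟩) hne
        · rw [ih.1 ij.1 h, zero_mul]

theorem exists_topdeg (hd : HigherDerivation R B) (hlf : hd.LocallyFinite) {b : B}
    (hb : b ∉ hd.kerSet) :
    ∃ d : ℕ, 1 ≤ d ∧ hd.D d b ≠ 0 ∧ ∀ ℓ : ℕ, d < ℓ → hd.D ℓ b = 0 := by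
  classical
  obtain ⟨M, hM⟩ := hlf b
  have hex : ∃ ℓ : ℕ, 1 ≤ ℓ ∧ hd.D ℓ b ≠ 0 := by
    by_contra h
    push_neg at h
    exact hb fun ℓ hℓ => h ℓ hℓ
  obtain ⟨ℓ0, hℓ0, hℓ0ne⟩ := hex
  haveI : DecidablePred (fun ℓ => hd.D ℓ b ≠ 0) := Classical.decPred _
  have hℓ0M : ℓ0 ≤ M := by
    by_contra h
    exact hℓ0ne (hM ℓ0 (by omega))
  refine ⟨Nat.findGreatest (fun ℓ => hd.D ℓ b ≠ 0) M, ?_, ?_, ?_⟩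
  · exact le_trans hℓ0 (Nat.le_findGreatest (P := fun ℓ => hd.D ℓ b ≠ 0) hℓ0M hℓ0ne)
  · exact Nat.findGreatest_spec (P := fun ℓ => hd.D ℓ b ≠ 0) hℓ0M hℓ0ne
  · intro ℓ hℓ
    by_cases hle : ℓ ≤ M
    · by_contra hne
      exact Nat.findGreatest_is_greatest (P := fun ℓ => hd.D ℓ b ≠ 0) hℓ hle hne
    · exact hM ℓ (by omega)

end HigherDerivation

/-- cf. Miyanishi. Let `R ⊆ B` be integral domains and let `D` be a
nontrivial locally finite iterative higher `R`-derivation on `B` with a slice `s`.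
Then `B = B^D[s]` and `s` is transcendental over `B^D`. -/
theorem stmt0 {R B : Type*} [CommRing R] [IsDomain R] [CommRing B] [IsDomain B]
    [Algebra R B] (hinj : Function.Injective (algebraMap R B))
    (hd : HigherDerivation R B) (hlf : hd.LocallyFinite) (hit : hd.Iterative)
    (hnt : ∃ b : B, b ∉ hd.kerSet) (s : B) (hs : hd.IsSlice s) :
    (∀ b : B, ∃ P : Polynomial B,
        (∀ i : ℕ, P.coeff i ∈ hd.kerSet) ∧ Polynomial.eval s P = b) ∧
    (∀ P : Polynomial B,
        (∀ i : ℕ, P.coeff i ∈ hd.kerSet) → Polynomial.eval s P = 0 → P = 0) := by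
  classical
  obtain ⟨N, hN1, hDNs, hstop, hunit, hmin⟩ := hs
  obtain ⟨v, huv⟩ := hunit.exists_right_inv
  have huker : hd.D N s ∈ hd.kerSet := hd.topcoeff_mem_ker hit hstop
  have hvker : v ∈ hd.kerSet := hd.ker_inv huker huv hDNs
  have hspow := hd.spow hstop
  -- nonvanishing of nonzero natural multiples
  have hsmul_ne : ∀ (n : ℕ) (x : B), ¬ ringChar B ∣ n → x ≠ 0 → n • x ≠ 0 := by
    intro n x h hx hc
    rw [nsmul_eq_mul] at hc
    rcases mul_eq_zero.mp hc with h1 | h1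
    · exact h ((ringChar.spec B n).mp h1)
    · exact hx h1
  -- Claim A : all middle binomial coefficients of N vanish in B
  have claimA : ∀ i : ℕ, 0 < i → i < N → ringChar B ∣ Nat.choose N i := by
    intro i h0 hiN
    by_contra hnd
    have key : hd.D (N - i) (hd.D i s) ≠ 0 := by
      rw [hit (N - i) i s]
      have h1 : N - i + i = N := by omega
      rw [h1]
      exact hsmul_ne _ _ hnd hDNs
    have hker : hd.D i s ∉ hd.kerSet := fun hk => key (hk (N - i) (by omega))
    obtain ⟨m, hmN, hmne⟩ := hmin _ hker
    apply hmne
    rw [hit m i s, hstop (m + i) (by omega), smul_zero]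
  -- N divides every exact top degree
  have hNdvd : ∀ (d : ℕ) (b : B), hd.D d b ≠ 0 → (∀ ℓ : ℕ, d < ℓ → hd.D ℓ b = 0) →
      N ∣ d := by
    intro d b hne htop
    by_cases hNone : N = 1
    · rw [hNone]; exact one_dvd d
    haveI := ringChar.charP B
    have hq := CharP.char_is_prime_or_zero B (ringChar B)
    have hdvdN := claimA 1 one_pos (by omega)
    rw [Nat.choose_one_right] at hdvdN
    rcases hq with hp | h0
    swap
    · rw [h0] at hdvdN
      have : N = 0 := Nat.zero_dvd.mp hdvdN
      omega
    set p := ringChar B with hpdef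
    set e := N.factorization p with hedef
    have hpe_dvd : p ^ e ∣ N := Nat.ordProj_dvd N p
    have hne0 : N ≠ 0 := by omega
    have hpeN : p ^ e = N := by
      by_contra hlt
      have hle : p ^ e ≤ N := Nat.le_of_dvd (by omega) hpe_dvd
      have hpos : 0 < p ^ e := pow_pos hp.pos e
      have hA := claimA (p ^ e) hpos (by omega)
      exact myLucas_pow hp e N hpe_dvd (Nat.not_dvd_ordCompl hp hne0) hA
    rcases Nat.eq_zero_or_pos (d % N) with hr | hr
    · exact Nat.dvd_of_mod_eq_zero hr
    exfalso
    have hrN : d % N < N := Nat.mod_lt _ (by omega)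
    have hrd : d % N ≤ d := Nat.mod_le d N
    have hCnd : ¬ p ∣ d.choose (d % N) := by
      rw [← hpeN]
      exact myLucas_mod hp e d
    have key : hd.D (d % N) (hd.D (d - d % N) b) ≠ 0 := by
      rw [hit (d % N) (d - d % N) b]
      have h1 : d % N + (d - d % N) = d := by omega
      rw [h1, Nat.choose_symm hrd]
      exact hsmul_ne _ _ hCnd hne
    have hker : hd.D (d - d % N) b ∉ hd.kerSet := fun hk => key (hk (d % N) (by omega))
    obtain ⟨m, hmN, hmne⟩ := hmin _ hker
    apply hmne
    rw [hit m (d - d % N) b, htop (m + (d - d % N)) (by omega), smul_zero]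
  -- Generation: every element with bounded derivation data lies in B^D[s]
  have hgen : ∀ d : ℕ, ∀ b : B, (∀ ℓ : ℕ, d < ℓ → hd.D ℓ b = 0) →
      ∃ P : Polynomial B, (∀ i : ℕ, P.coeff i ∈ hd.kerSet) ∧ Polynomial.eval s P = b := by
    intro d
    induction d using Nat.strong_induction_on with
    | _ d ih =>
      intro b hb
      by_cases hbk : b ∈ hd.kerSet
      · refine ⟨Polynomial.C b, ?_, Polynomial.eval_C⟩
        intro i
        rw [Polynomial.coeff_C]
        split_ifs
        · exact hbk
        · exact hd.ker_zero
      · obtain ⟨d', hd'1, hd'ne, hd'top⟩ := hd.exists_topdeg hlf hbk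
        have hd'le : d' ≤ d := by
          by_contra h
          exact hd'ne (hb d' (by omega))
        obtain ⟨k, hk⟩ := hNdvd d' b hd'ne hd'top
        have hcker : hd.D d' b ∈ hd.kerSet := hd.topcoeff_mem_ker hit hd'top
        have haker : hd.D d' b * v ^ k ∈ hd.kerSet :=
          hd.ker_mul hcker (hd.ker_pow hvker k)
        set a := hd.D d' b * v ^ k with hadef
        have hauk : a * (hd.D N s) ^ k = hd.D d' b := by
          rw [hadef, mul_assoc, ← mul_pow, mul_comm v (hd.D N s), huv, one_pow, mul_one]
        set b' := b - a * s ^ k with hb'def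
        have hb' : ∀ ℓ : ℕ, d' - 1 < ℓ → hd.D ℓ b' = 0 := by
          intro ℓ hℓ
          rw [hb'def, map_sub, hd.D_mul_ker ℓ haker (s ^ k)]
          by_cases hcase : ℓ = d'
          · subst hcase
            rw [hk, (hspow k).2, ← hk, hauk, sub_self]
          · have hlt : d' < ℓ := by omega
            rw [hd'top ℓ hlt, (hspow k).1 ℓ (by omega), mul_zero, sub_self]
        obtain ⟨P', hP'c, hP'e⟩ := ih (d' - 1) (by omega) b' hb'
        refine ⟨P' + Polynomial.C a * Polynomial.X ^ k, ?_, ?_⟩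
        · intro i
          rw [Polynomial.coeff_add, Polynomial.coeff_C_mul, Polynomial.coeff_X_pow]
          split_ifs
          · rw [mul_one]; exact hd.ker_add (hP'c i) haker
          · rw [mul_zero, add_zero]; exact hP'c i
        · rw [Polynomial.eval_add, Polynomial.eval_mul, Polynomial.eval_C,
            Polynomial.eval_pow, Polynomial.eval_X, hP'e, hb'def]
          ring
  constructor
  · intro b
    obtain ⟨M, hM⟩ := hlf b
    exact hgen M b fun ℓ hℓ => hM ℓ (le_of_lt hℓ)
  · intro P hPc hPe
    by_contra hP0
    set k := P.natDegree with hkdef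
    have hlead : P.coeff k ≠ 0 := fun h => hP0 (Polynomial.leadingCoeff_eq_zero.mp h)
    have h0 : hd.D (N * k) (Polynomial.eval s P) = 0 := by
      rw [hPe]; exact map_zero _
    rw [Polynomial.eval_eq_sum_range, map_sum] at h0
    have hsum : ∑ i ∈ Finset.range (k + 1), hd.D (N * k) (P.coeff i * s ^ i)
        = hd.D (N * k) (P.coeff k * s ^ k) := by
      apply Finset.sum_eq_single_of_mem k (Finset.self_mem_range_succ k)
      intro i hi hik
      have hik' : i < k := by
        have := Finset.mem_range.mp hi
        omega
      have hNik : N * i < N * k := by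
        have h2 : N * (i + 1) ≤ N * k := Nat.mul_le_mul_left N (by omega)
        have h3 : N * (i + 1) = N * i + N := by ring
        omega
      rw [hd.D_mul_ker (N * k) (hPc i) (s ^ i), (hspow i).1 (N * k) hNik, mul_zero]
    rw [hsum, hd.D_mul_ker (N * k) (hPc k) (s ^ k), (hspow k).2] at h0
    exact mul_ne_zero hlead (pow_ne_zero k hDNs) h0
end

section
/- Let R be an integral domain containing a prime field, and let f ∈ R[x,y] be a variable over R, i.e. there exists g ∈ R[x,y] such that f and g are algebraically independent over R and R[f,g] = R[x,y]. Then the natural inclusion R[f] → R[x,y] (of the R-subalgebra generated by f) is smooth. -/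
open MvPolynomial

universe u

/-- Let `R` be an integral domain containing a prime field (i.e.
containing a subring which is a field), and let `f ∈ R[x,y]` be a variable over `R`:
there is `g` with `f, g` algebraically independent over `R` and `R[f,g] = R[x,y]`.
Then the natural inclusion `R[f] → R[x,y]` is smooth (formally smooth). -/
theorem stmt2 {R : Type u} [CommRing R] [IsDomain R]
    (hprime : ∃ K : Subring R, IsField K)
    (f : MvPolynomial (Fin 2) R)
    (hvar : ∃ g : MvPolynomial (Fin 2) R,
      AlgebraicIndependent R ![f, g] ∧ Algebra.adjoin R {f, g} = ⊤) :
    Algebra.FormallySmooth (Algebra.adjoin R {f}) (MvPolynomial (Fin 2) R) := by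
  obtain ⟨g, hI, hadj⟩ := hvar
  set A := Algebra.adjoin R {f}
  -- f alone is algebraically independent
  have hf : AlgebraicIndependent R (fun _ : Unit => f) := by
    have := hI.comp (fun _ : Unit => (0 : Fin 2)) (fun a b _ => Subsingleton.elim a b)
    simpa using this
  have hrange : Set.range (fun _ : Unit => f) = {f} := by
    ext x; simp [eq_comm]
  -- g is transcendental over A = adjoin R {f}
  have htrans : Transcendental A g := by
    have he : Function.Injective (fun o : Option Unit => o.elim (1 : Fin 2) fun _ => 0) := by
      intro a b hab
      cases a <;> cases b <;> simp_all
    have h2 : AlgebraicIndependent R (fun o : Option Unit => o.elim g fun _ => f) := by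
      have := hI.comp _ he
      convert this using 1
      funext o; cases o <;> simp
    have := (hf.option_iff_transcendental g).mp h2
    rwa [hrange] at this
  -- adjoin A {g} = ⊤
  have hAg : Algebra.adjoin A {g} = ⊤ := by
    have : Algebra.adjoin R ({f} ∪ {g}) =
        (Algebra.adjoin A {g}).restrictScalars R := by
      exact Algebra.adjoin_union_eq_adjoin_adjoin R {f} {g}
    rw [Set.singleton_union] at this
    rw [hadj] at this
    have h2 : (Algebra.adjoin A {g}).restrictScalars R =
        (⊤ : Subalgebra A (MvPolynomial (Fin 2) R)).restrictScalars R := by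
      rw [← this, Subalgebra.restrictScalars_top]
    exact Subalgebra.restrictScalars_injective R h2
  -- the aeval map at g is bijective
  have hbij : Function.Bijective
      (Polynomial.aeval (R := A) g : Polynomial A →ₐ[A] MvPolynomial (Fin 2) R) := by
    constructor
    · exact (transcendental_iff_injective).mp htrans
    · intro x
      have hx : x ∈ Algebra.adjoin A {g} := hAg ▸ Algebra.mem_top
      rw [Algebra.adjoin_singleton_eq_range_aeval] at hx
      exact hx
  have e := AlgEquiv.ofBijective _ hbij
  exact Algebra.FormallySmooth.of_equiv (A := Polynomial A) (e := e)
end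

section
/- Let R be an integral domain containing a prime field and let R[x,y] be the polynomial ring in two variables over R. The natural inclusion R[xy] → R[x,y] of the R-subalgebra generated by the element xy is not smooth. -/
open MvPolynomial

universe u

set_option maxHeartbeats 2000000 in
set_option synthInstance.maxHeartbeats 1000000 in
theorem stmt4_aux {R : Type u} [CommRing R] [IsDomain R]
    (A : Type u) [CommRing A] [Algebra R A]
    [Algebra A (MvPolynomial (Fin 2) R)] [IsScalarTower R A (MvPolynomial (Fin 2) R)]
    (t : A) (ht : algebraMap A (MvPolynomial (Fin 2) R) t = X 0 * X 1)
    (hrange : ∀ a : A, algebraMap A (MvPolynomial (Fin 2) R) a ∈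
      Algebra.adjoin R {(X 0 * X 1 : MvPolynomial (Fin 2) R)}) :
    ¬ Algebra.FormallySmooth A (MvPolynomial (Fin 2) R) := by
  intro hsm
  haveI := hsm
  classical
  set φ : MvPolynomial (Fin 2) A →ₐ[A] MvPolynomial (Fin 2) R := aeval ![X 0, X 1] with hφdef
  have hφX : ∀ i : Fin 2, φ (X i) = X i := by
    intro i
    rw [hφdef, aeval_X]
    fin_cases i <;> simp
  have hφC : ∀ a : A, φ (C a) = algebraMap A (MvPolynomial (Fin 2) R) a := by
    intro a
    rw [hφdef, aeval_C]
  -- surjectivity of φ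
  have hφs : Function.Surjective φ := by
    intro b
    induction b using MvPolynomial.induction_on with
    | C a =>
      refine ⟨C (algebraMap R A a), ?_⟩
      rw [hφC, ← IsScalarTower.algebraMap_apply, algebraMap_eq]
    | add p q hp hq =>
      obtain ⟨p', rfl⟩ := hp
      obtain ⟨q', rfl⟩ := hq
      exact ⟨p' + q', by rw [map_add]⟩
    | mul_X p n hp =>
      obtain ⟨p', rfl⟩ := hp
      exact ⟨p' * X n, by rw [map_mul, hφX]⟩
  -- the ideal I = ker φ and the square-zero extension P/I²
  set I : Ideal (MvPolynomial (Fin 2) A) := RingHom.ker (φ : MvPolynomial (Fin 2) A →+* MvPolynomial (Fin 2) R) with hIdef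
  have hI2le : ∀ a ∈ I ^ 2, φ a = 0 := by
    intro a ha
    exact Ideal.pow_le_self two_ne_zero ha
  set f : (MvPolynomial (Fin 2) A ⧸ (I ^ 2)) →ₐ[A] MvPolynomial (Fin 2) R :=
    Ideal.Quotient.liftₐ (I ^ 2) φ hI2le with hfdef
  have hfmk : ∀ z, f (Ideal.Quotient.mk (I ^ 2) z) = φ z := by
    intro z
    rw [hfdef, Ideal.Quotient.liftₐ_apply]
    rfl
  have hfs : Function.Surjective f := by
    intro b
    obtain ⟨z, hz⟩ := hφs b
    exact ⟨Ideal.Quotient.mk (I ^ 2) z, by rw [hfmk, hz]⟩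
  have hker : RingHom.ker (f : (MvPolynomial (Fin 2) A ⧸ (I ^ 2)) →+* MvPolynomial (Fin 2) R)
      = I.map (Ideal.Quotient.mk (I ^ 2)) := by
    have h := Ideal.ker_quotient_lift (I := I ^ 2) (φ : MvPolynomial (Fin 2) A →+* MvPolynomial (Fin 2) R) hI2le
    rw [← h]
    rfl
  have hnil : IsNilpotent (RingHom.ker (f : (MvPolynomial (Fin 2) A ⧸ (I ^ 2)) →+* MvPolynomial (Fin 2) R)) := by
    refine ⟨2, ?_⟩
    rw [hker, ← Ideal.map_pow, Ideal.map_quotient_self]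
    rfl
  -- the lift
  set v : MvPolynomial (Fin 2) R →ₐ[A] (MvPolynomial (Fin 2) A ⧸ (I ^ 2)) :=
    Algebra.FormallySmooth.liftOfSurjective (AlgHom.id A (MvPolynomial (Fin 2) R)) f hfs hnil with hvdef
  have hv : ∀ b, f (v b) = b := by
    intro b
    rw [hvdef]
    exact Algebra.FormallySmooth.liftOfSurjective_apply _ f hfs hnil b
  -- representatives
  obtain ⟨p, hp⟩ := Ideal.Quotient.mk_surjective (v (X 0))
  obtain ⟨q, hq⟩ := Ideal.Quotient.mk_surjective (v (X 1))
  have hfp : φ p = X 0 := by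
    have h := hv (X 0)
    rw [← hp, hfmk] at h
    exact h
  have hfq : φ q = X 1 := by
    have h := hv (X 1)
    rw [← hq, hfmk] at h
    exact h
  -- v (X 0 * X 1) = mk (C t)
  have hvt : v (X 0 * X 1) = Ideal.Quotient.mk (I ^ 2) (C t) := by
    rw [← ht, AlgHom.commutes]
    rw [IsScalarTower.algebraMap_apply A (MvPolynomial (Fin 2) A)
      (MvPolynomial (Fin 2) A ⧸ (I ^ 2)), Ideal.Quotient.algebraMap_eq, algebraMap_eq]
  have hpq : p * q - C t ∈ (I ^ 2 : Ideal (MvPolynomial (Fin 2) A)) := by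
    have h : Ideal.Quotient.mk (I ^ 2) (p * q) = Ideal.Quotient.mk (I ^ 2) (C t) := by
      rw [map_mul, hp, hq, ← map_mul v, hvt]
    exact Ideal.Quotient.eq.mp h
  -- the "evaluation at the origin" maps
  set c : MvPolynomial (Fin 2) A →ₐ[A] MvPolynomial (Fin 2) R := aeval (fun _ => 0) with hcdef
  set ev0 : MvPolynomial (Fin 2) R →ₐ[R] R := aeval (fun _ => 0) with hevdef
  have hcX : ∀ i : Fin 2, c (X i) = 0 := by
    intro i
    rw [hcdef, aeval_X]
  have hcC : ∀ a : A, c (C a) = algebraMap A (MvPolynomial (Fin 2) R) a := by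
    intro a
    rw [hcdef, aeval_C]
  have hkey : (ev0 : MvPolynomial (Fin 2) R →+* R).comp (c : MvPolynomial (Fin 2) A →+* MvPolynomial (Fin 2) R) =
      (ev0 : MvPolynomial (Fin 2) R →+* R).comp (φ : MvPolynomial (Fin 2) A →+* MvPolynomial (Fin 2) R) := by
    apply MvPolynomial.ringHom_ext
    · intro a
      have h1 : c (C a) = φ (C a) := by rw [hcC, hφC]
      simp only [RingHom.coe_comp, Function.comp_apply]
      rw [show ((c : MvPolynomial (Fin 2) A →+* MvPolynomial (Fin 2) R) (C a)) = c (C a) from rfl,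
        show ((φ : MvPolynomial (Fin 2) A →+* MvPolynomial (Fin 2) R) (C a)) = φ (C a) from rfl, h1]
    · intro i
      simp only [RingHom.coe_comp, Function.comp_apply, AlgHom.coe_toRingHom]
      rw [hcX, hφX, map_zero, hevdef, aeval_X]
  -- the key claim: c maps I into the ideal (xy)
  have hcI : ∀ γ ∈ I, c γ ∈ Ideal.span {(X 0 * X 1 : MvPolynomial (Fin 2) R)} := by
    intro γ hγ
    have h1 : c γ = algebraMap A (MvPolynomial (Fin 2) R) (constantCoeff γ) := by
      rw [hcdef]
      exact aeval_zero' γ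
    have h2 : ev0 (c γ) = 0 := by
      have h := RingHom.congr_fun hkey γ
      simp only [RingHom.coe_comp, Function.comp_apply, AlgHom.coe_toRingHom] at h
      have hφγ : φ γ = 0 := hγ
      rw [hφγ] at h
      rw [h, map_zero]
    have h3 := hrange (constantCoeff γ)
    rw [Algebra.adjoin_singleton_eq_range_aeval] at h3
    obtain ⟨g, hg0⟩ := h3
    have hg : Polynomial.aeval (X 0 * X 1 : MvPolynomial (Fin 2) R) g
        = algebraMap A (MvPolynomial (Fin 2) R) (constantCoeff γ) := hg0
    have h4 : ev0 (Polynomial.aeval (X 0 * X 1 : MvPolynomial (Fin 2) R) g) = 0 := by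
      rw [hg, ← h1, h2]
    rw [← Polynomial.aeval_algHom_apply] at h4
    have hev0xy : ev0 (X 0 * X 1 : MvPolynomial (Fin 2) R) = 0 := by
      rw [map_mul, hevdef, aeval_X, aeval_X]
      simp
    rw [hev0xy] at h4
    have h5 : g.coeff 0 = 0 := by
      rw [Polynomial.aeval_def, Polynomial.eval₂_at_zero] at h4
      simpa using h4
    obtain ⟨g', hg'⟩ := Polynomial.X_dvd_iff.mpr h5
    rw [h1, ← hg, hg']
    rw [map_mul, Polynomial.aeval_X]
    exact Ideal.mem_span_singleton.mpr ⟨Polynomial.aeval (X 0 * X 1) g', rfl⟩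
  -- hence c maps I² into (xy)²
  have hmapI : Ideal.map (c : MvPolynomial (Fin 2) A →+* MvPolynomial (Fin 2) R) I ≤
      Ideal.span {(X 0 * X 1 : MvPolynomial (Fin 2) R)} :=
    Ideal.map_le_iff_le_comap.mpr hcI
  have hcI2 : ∀ z ∈ (I ^ 2 : Ideal (MvPolynomial (Fin 2) A)),
      c z ∈ Ideal.span {(X 0 * X 1 : MvPolynomial (Fin 2) R)} ^ 2 := by
    intro z hz
    have h := Ideal.mem_map_of_mem (c : MvPolynomial (Fin 2) A →+* MvPolynomial (Fin 2) R) hz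
    rw [Ideal.map_pow] at h
    exact Ideal.pow_right_mono hmapI 2 h
  -- p - X 0 and q - X 1 are in I
  have hα : p - X 0 ∈ I := by
    show φ (p - X 0) = 0
    rw [map_sub, hfp, hφX, sub_self]
  have hβ : q - X 1 ∈ I := by
    show φ (q - X 1) = 0
    rw [map_sub, hfq, hφX, sub_self]
  have hcp := hcI _ hα
  have hcq := hcI _ hβ
  -- compute c (p * q - C t)
  have ecp : c p = c (p - X 0) := by rw [map_sub, hcX, sub_zero]
  have ecq : c q = c (q - X 1) := by rw [map_sub, hcX, sub_zero]
  have e : c (p * q - C t) = c (p - X 0) * c (q - X 1) - X 0 * X 1 := by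
    rw [map_sub, map_mul, ecp, ecq, hcC, ht]
  have hcz := hcI2 _ hpq
  rw [e] at hcz
  have hprod : c (p - X 0) * c (q - X 1) ∈ Ideal.span {(X 0 * X 1 : MvPolynomial (Fin 2) R)} ^ 2 := by
    rw [pow_two]
    exact Ideal.mul_mem_mul hcp hcq
  have hmem := Ideal.sub_mem _ hprod hcz
  rw [sub_sub_cancel] at hmem
  -- xy ∈ (xy)² gives a contradiction
  rw [Ideal.span_singleton_pow, Ideal.mem_span_singleton] at hmem
  obtain ⟨h, hh⟩ := hmem
  have hxy0 : (X 0 * X 1 : MvPolynomial (Fin 2) R) ≠ 0 :=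
    mul_ne_zero (X_ne_zero _) (X_ne_zero _)
  have hfactor : (X 0 * X 1 : MvPolynomial (Fin 2) R) * (1 - (X 0 * X 1) * h) = 0 := by
    linear_combination hh
  rcases mul_eq_zero.mp hfactor with h0 | h0
  · exact hxy0 h0
  · have h1 : (1 : MvPolynomial (Fin 2) R) = (X 0 * X 1) * h := by
      linear_combination h0
    have h2 := congrArg constantCoeff h1
    rw [map_one, map_mul, map_mul, constantCoeff_X, constantCoeff_X] at h2
    simp at h2


/-- Let `R` be an integral domain containing a prime field (i.e.
containing a subring which is a field). The natural inclusion `R[xy] → R[x,y]` of the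
`R`-subalgebra generated by `xy` is not smooth (formally smooth). -/
theorem stmt4 {R : Type u} [CommRing R] [IsDomain R]
    (hprime : ∃ K : Subring R, IsField K) :
    ¬ Algebra.FormallySmooth
      (Algebra.adjoin R {(X 0 * X 1 : MvPolynomial (Fin 2) R)})
      (MvPolynomial (Fin 2) R) := by
  have htmem : (X 0 * X 1 : MvPolynomial (Fin 2) R) ∈
      Algebra.adjoin R {(X 0 * X 1 : MvPolynomial (Fin 2) R)} := Algebra.subset_adjoin rfl
  exact stmt4_aux (Algebra.adjoin R {(X 0 * X 1 : MvPolynomial (Fin 2) R)})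
    ⟨X 0 * X 1, htmem⟩ rfl (fun a => a.2)
end

section
/- Let R be an integral domain of characteristic p > 0, let B = R[x_1,…,x_n] be the polynomial ring in n variables over R, and let f_1,…,f_{n-1} ∈ B with f_i ∉ R[x_1^p,…,x_n^p] for each i (i.e. no f_i lies in the R-subalgebra generated by x_1^p,…,x_n^p). Set F = (f_1,…,f_{n-1}) and assume f_1,…,f_{n-1} are algebraically independent over R. If the natural inclusion R[F] = R[f_1,…,f_{n-1}] → B is smooth, then there exists a higher R-derivation D on B of Jacobian type determined by F. -/
open MvPolynomial

/-- The Jacobian derivation `Δ_F` on `R[x_0, …, x_n]` determined by the `n`-tuple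
`F = (f 0, …, f (n-1))`: `Δ_F(g)` is the determinant of the `(n+1) × (n+1)` matrix
whose first `n` rows are the partials of the `f i` and last row the partials of `g`. -/
noncomputable def jacobianDerivF {R : Type*} [CommRing R] {n : ℕ}
    (f : Fin n → MvPolynomial (Fin (n + 1)) R) (g : MvPolynomial (Fin (n + 1)) R) :
    MvPolynomial (Fin (n + 1)) R :=
  Matrix.det (Matrix.of fun i j : Fin (n + 1) =>
    Fin.lastCases (pderiv j g) (fun i' : Fin n => pderiv j (f i')) i)

/-- `D` is of Jacobian type determined by `F = (f 0, …, f (n-1))` (in characteristic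
`p`): the `f i` are algebraically independent over `R`, `f i ∈ B^D`, `D_1 = Δ_F`, and
`ℓ! • D_ℓ = Δ_F^[ℓ]` for `0 ≤ ℓ ≤ p-1`. -/
def IsJacobianTypeF {R : Type*} [CommRing R] {n : ℕ} (p : ℕ)
    (hd : HigherDerivation R (MvPolynomial (Fin (n + 1)) R))
    (f : Fin n → MvPolynomial (Fin (n + 1)) R) : Prop :=
  AlgebraicIndependent R f ∧ (∀ i, f i ∈ hd.kerSet) ∧
    (∀ g, hd.D 1 g = jacobianDerivF f g) ∧
    ∀ ℓ : ℕ, ℓ < p → ∀ g, ℓ.factorial • hd.D ℓ g = (jacobianDerivF f)^[ℓ] g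

/-- `F = (f 0, …, f (n-1))` is extendable: there is `s` such that
`f 0, …, f (n-1), s` are algebraically independent over `R` and generate
`R[x_0, …, x_n]` as an `R`-algebra. -/
def Extendable {R : Type*} [CommRing R] {n : ℕ}
    (f : Fin n → MvPolynomial (Fin (n + 1)) R) : Prop :=
  ∃ s : MvPolynomial (Fin (n + 1)) R,
    AlgebraicIndependent R (Fin.snoc f s) ∧
      Algebra.adjoin R (Set.range (Fin.snoc f s)) = ⊤

universe u

set_option linter.unusedSectionVars false
set_option linter.unusedVariables false

namespace JacAux


lemma unit_smul_cancel {R M : Type*} [CommRing R] [AddCommMonoid M] [Module R M]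
    {c : R} (hc : IsUnit c) {x y : M} (h : c • x = c • y) : x = y := by
  have := congrArg (fun z => Ring.inverse c • z) h
  simpa [smul_smul, Ring.inverse_mul_cancel _ hc] using this

section Key

variable {R : Type*} [CommRing R] {B : Type*} [CommRing B] [Algebra R B]
variable (Δ : B →ₗ[R] B)

/-- The divided power `Gd ℓ = (1/ℓ!) Δ^ℓ`. -/
noncomputable def Gd (ℓ : ℕ) (g : B) : B :=
  Ring.inverse ((ℓ.factorial : R)) • (Δ ^ ℓ) g

lemma Gd_zero (g : B) : Gd Δ 0 g = g := by simp [Gd]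

lemma Gd_iterate (ℓ : ℕ) (g : B) :
    Gd Δ ℓ g = Ring.inverse ((ℓ.factorial : R)) • (⇑Δ)^[ℓ] g := by
  rw [Gd, Module.End.pow_apply]

variable (p : ℕ)

lemma nat_unit (hfact : ∀ ℓ, ℓ < p → IsUnit ((ℓ.factorial : R))) {ℓ : ℕ} (h : ℓ + 1 < p) : IsUnit (((ℓ+1 : ℕ) : R)) := by
  have h2 := hfact (ℓ+1) h
  rw [Nat.factorial_succ, Nat.cast_mul] at h2
  exact isUnit_of_mul_isUnit_left h2

lemma inv_fact_succ (hfact : ∀ ℓ, ℓ < p → IsUnit ((ℓ.factorial : R))) {ℓ : ℕ} (h : ℓ + 1 < p) :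
    ((ℓ+1 : ℕ) : R) * Ring.inverse ((((ℓ+1).factorial : ℕ) : R)) =
      Ring.inverse (((ℓ.factorial : ℕ) : R)) := by
  have h1 := hfact ℓ (by omega)
  have h2 := hfact (ℓ+1) h
  have hn := nat_unit p hfact h
  have e1 : ((((ℓ+1).factorial : ℕ)) : R) = ((ℓ+1 : ℕ) : R) * ((ℓ.factorial : ℕ) : R) := by
    rw [Nat.factorial_succ]; push_cast; ring
  rw [e1, Ring.mul_inverse_rev, ← mul_assoc, mul_comm (((ℓ+1:ℕ):R)) _, mul_assoc,
    Ring.mul_inverse_cancel _ hn, mul_one]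

lemma Gd_succ_smul (hfact : ∀ ℓ, ℓ < p → IsUnit ((ℓ.factorial : R))) {ℓ : ℕ} (h : ℓ + 1 < p) (v : B) :
    ((ℓ+1 : ℕ) : R) • Gd Δ (ℓ+1) v = Δ (Gd Δ ℓ v) := by
  rw [Gd, Gd, map_smul, smul_smul, inv_fact_succ p hfact h]
  congr 1
  rw [pow_succ', Module.End.mul_apply]

lemma Gd_key (hfact : ∀ ℓ, ℓ < p → IsUnit ((ℓ.factorial : R)))
    (hmul : ∀ a b : B, Δ (a * b) = a * Δ b + b * Δ a) : ∀ ℓ, ℓ < p → ∀ a b : B,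
    ∑ ij ∈ Finset.HasAntidiagonal.antidiagonal ℓ, Gd Δ ij.1 a * Gd Δ ij.2 b = Gd Δ ℓ (a * b) := by
  intro ℓ
  induction ℓ with
  | zero => intro _ a b; simp [Gd_zero]
  | succ ℓ IH =>
    intro h a b
    have hℓ := IH (by omega) a b
    have hu : IsUnit (((ℓ+1 : ℕ)) : R) := nat_unit p hfact h
    apply unit_smul_cancel hu
    have hR : (((ℓ+1:ℕ)) : R) • Gd Δ (ℓ+1) (a*b) =
        (∑ ij ∈ Finset.HasAntidiagonal.antidiagonal ℓ, Δ (Gd Δ ij.1 a) * Gd Δ ij.2 b) +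
          ∑ ij ∈ Finset.HasAntidiagonal.antidiagonal ℓ, Gd Δ ij.1 a * Δ (Gd Δ ij.2 b) := by
      rw [Gd_succ_smul Δ p hfact h, ← hℓ, map_sum, ← Finset.sum_add_distrib]
      refine Finset.sum_congr rfl fun ij _ => ?_
      rw [hmul]; ring
    rw [hR, Finset.smul_sum]
    have split : ∀ ij ∈ Finset.HasAntidiagonal.antidiagonal (ℓ+1),
        (((ℓ+1:ℕ)) : R) • (Gd Δ ij.1 a * Gd Δ ij.2 b) =
          (((ij.1:ℕ)) : R) • Gd Δ ij.1 a * Gd Δ ij.2 b +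
          Gd Δ ij.1 a * ((((ij.2:ℕ)) : R) • Gd Δ ij.2 b) := by
      intro ij hij
      rw [Finset.HasAntidiagonal.mem_antidiagonal] at hij
      rw [← hij]
      push_cast
      rw [add_smul, smul_mul_assoc, mul_smul_comm]
    rw [Finset.sum_congr rfl split, Finset.sum_add_distrib]
    congr 1
    · rw [Finset.Nat.sum_antidiagonal_succ
        (f := fun ij => (((ij.1:ℕ)) : R) • Gd Δ ij.1 a * Gd Δ ij.2 b)]
      simp only [Nat.cast_zero, zero_smul, zero_mul, zero_add]
      refine Finset.sum_congr rfl fun ij hij => ?_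
      rw [Finset.HasAntidiagonal.mem_antidiagonal] at hij
      rw [Gd_succ_smul Δ p hfact (by omega)]
    · rw [Finset.Nat.sum_antidiagonal_succ'
        (f := fun ij => Gd Δ ij.1 a * ((((ij.2:ℕ)) : R) • Gd Δ ij.2 b))]
      simp only [Nat.cast_zero, zero_smul, mul_zero, zero_add]
      refine Finset.sum_congr rfl fun ij hij => ?_
      rw [Finset.HasAntidiagonal.mem_antidiagonal] at hij
      rw [Gd_succ_smul Δ p hfact (by omega)]



lemma Gd_add (ℓ : ℕ) (a b : B) : Gd Δ ℓ (a + b) = Gd Δ ℓ a + Gd Δ ℓ b := by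
  rw [Gd, Gd, Gd, map_add, smul_add]

lemma Gd_smul (ℓ : ℕ) (r : R) (a : B) : Gd Δ ℓ (r • a) = r • Gd Δ ℓ a := by
  rw [Gd, Gd, map_smul, smul_comm]

/-- truncated exponential -/
noncomputable def Texp (g : B) : Polynomial B :=
  ∑ ℓ ∈ Finset.range p, Polynomial.C (Gd Δ ℓ g) * Polynomial.X ^ ℓ

lemma coeff_Texp (g : B) (k : ℕ) :
    (Texp Δ p g).coeff k = if k < p then Gd Δ k g else 0 := by
  rw [Texp, Polynomial.finset_sum_coeff]
  simp only [Polynomial.coeff_C_mul, Polynomial.coeff_X_pow, mul_ite, mul_one, mul_zero]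
  rw [Finset.sum_ite_eq (Finset.range p) k (fun ℓ => Gd Δ ℓ g)]
  simp [Finset.mem_range]

lemma Texp_add (a b : B) : Texp Δ p (a + b) = Texp Δ p a + Texp Δ p b := by
  rw [Texp, Texp, Texp, ← Finset.sum_add_distrib]
  refine Finset.sum_congr rfl fun ℓ _ => ?_
  rw [Gd_add, map_add, add_mul]

lemma Tmul (hfact : ∀ ℓ, ℓ < p → IsUnit ((ℓ.factorial : R)))
    (hmul : ∀ a b : B, Δ (a * b) = a * Δ b + b * Δ a) (a b : B) :
    (Polynomial.X : Polynomial B) ^ p ∣ Texp Δ p a * Texp Δ p b - Texp Δ p (a * b) := by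
  rw [Polynomial.X_pow_dvd_iff]
  intro d hd
  rw [Polynomial.coeff_sub, Polynomial.coeff_mul, coeff_Texp, if_pos hd, sub_eq_zero,
    ← Gd_key Δ p hfact hmul d hd a b]
  refine Finset.sum_congr rfl fun ij hij => ?_
  rw [Finset.HasAntidiagonal.mem_antidiagonal] at hij
  rw [coeff_Texp, coeff_Texp, if_pos (by omega), if_pos (by omega)]


end Key

section Jac


variable {R : Type*} [CommRing R] {n : ℕ} (f : Fin n → MvPolynomial (Fin (n + 1)) R)

noncomputable def jmat (v : Fin (n+1) → MvPolynomial (Fin (n+1)) R) :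
    Matrix (Fin (n+1)) (Fin (n+1)) (MvPolynomial (Fin (n+1)) R) :=
  Matrix.of fun i j => Fin.lastCases (v j) (fun i' : Fin n => pderiv j (f i')) i

lemma jd_eq (g : MvPolynomial (Fin (n+1)) R) :
    jacobianDerivF f g = (jmat f (fun j => pderiv j g)).det := rfl

lemma jmat_updateRow (v : Fin (n+1) → MvPolynomial (Fin (n+1)) R) :
    jmat f v = (jmat f 0).updateRow (Fin.last n) v := by
  funext i j
  induction i using Fin.lastCases with
  | last => simp [jmat, Matrix.updateRow_self]
  | cast i' =>
      rw [Matrix.updateRow_ne (Fin.castSucc_lt_last i').ne]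
      simp [jmat]

lemma jd_det_row (v : Fin (n+1) → MvPolynomial (Fin (n+1)) R) :
    (jmat f v).det = ((jmat f 0).updateRow (Fin.last n) v).det := by
  rw [← jmat_updateRow]

lemma jd_add (a b : MvPolynomial (Fin (n+1)) R) :
    jacobianDerivF f (a + b) = jacobianDerivF f a + jacobianDerivF f b := by
  simp only [jd_eq, jd_det_row]
  have : (fun j => pderiv j (a + b)) =
      (fun j : Fin (n+1) => pderiv j a) + (fun j => pderiv j b) := by
    funext j; simp
  rw [this, Matrix.det_updateRow_add]

lemma jd_smul (r : R) (a : MvPolynomial (Fin (n+1)) R) :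
    jacobianDerivF f (r • a) = r • jacobianDerivF f a := by
  simp only [jd_eq, jd_det_row]
  have : (fun j => pderiv j (r • a)) =
      (C r : MvPolynomial (Fin (n+1)) R) • (fun j : Fin (n+1) => pderiv j a) := by
    funext j; simp [Pi.smul_apply, smul_eq_C_mul, map_smul, MvPolynomial.smul_eq_C_mul]
  rw [this, Matrix.det_updateRow_smul, ← MvPolynomial.smul_eq_C_mul]

lemma jd_mul (a b : MvPolynomial (Fin (n+1)) R) :
    jacobianDerivF f (a * b) = a * jacobianDerivF f b + b * jacobianDerivF f a := by
  simp only [jd_eq, jd_det_row]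
  have : (fun j => pderiv j (a * b)) =
      a • (fun j : Fin (n+1) => pderiv j b) + b • (fun j : Fin (n+1) => pderiv j a) := by
    funext j
    simp only [Pi.add_apply, Pi.smul_apply, smul_eq_mul, pderiv_mul]
    ring
  rw [this, Matrix.det_updateRow_add, Matrix.det_updateRow_smul, Matrix.det_updateRow_smul]

lemma jd_f (i : Fin n) : jacobianDerivF f (f i) = 0 := by
  rw [jd_eq]
  apply Matrix.det_zero_of_row_eq (i := Fin.castSucc i) (j := Fin.last n)
      (Fin.castSucc_lt_last i).ne
  funext j
  simp [jmat]

lemma jd_C (r : R) : jacobianDerivF f (C r) = 0 := by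
  rw [jd_eq]
  apply Matrix.det_eq_zero_of_row_eq_zero (i := Fin.last n)
  intro j
  simp [jmat]

/-- `Δ_F` as an `R`-linear map. -/
noncomputable def jdL : MvPolynomial (Fin (n+1)) R →ₗ[R] MvPolynomial (Fin (n+1)) R where
  toFun := jacobianDerivF f
  map_add' := jd_add f
  map_smul' := jd_smul f

@[simp] lemma jdL_apply (g) : jdL f g = jacobianDerivF f g := rfl


end Jac

section KeyMore
variable {R : Type*} [CommRing R] {B : Type*} [CommRing B] [Algebra R B]
variable (Δ : B →ₗ[R] B)

variable (hmul : ∀ a b : B, Δ (a * b) = a * Δ b + b * Δ a)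

lemma deriv_one_zero (hmul : ∀ a b : B, Δ (a * b) = a * Δ b + b * Δ a) : Δ 1 = 0 := by
  have h := hmul 1 1
  simp only [mul_one, one_mul] at h
  exact left_eq_add.mp h

lemma deriv_algebraMap_zero (hmul : ∀ a b : B, Δ (a * b) = a * Δ b + b * Δ a) (r : R) : Δ (algebraMap R B r) = 0 := by
  rw [Algebra.algebraMap_eq_smul_one, map_smul, deriv_one_zero Δ hmul, smul_zero]

lemma deriv_adjoin_zero (hmul : ∀ a b : B, Δ (a * b) = a * Δ b + b * Δ a) (s : Set B) (hs : ∀ x ∈ s, Δ x = 0) :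
    ∀ b ∈ Algebra.adjoin R s, Δ b = 0 := by
  intro b hb
  induction hb using Algebra.adjoin_induction with
  | mem x hx => exact hs x hx
  | algebraMap r => exact deriv_algebraMap_zero Δ hmul r
  | add x y _ _ hx hy => rw [map_add, hx, hy, add_zero]
  | mul x y _ _ hx hy => rw [hmul, hx, hy, mul_zero, mul_zero, add_zero]

lemma Gd_of_deriv_zero {v : B} (h : Δ v = 0) {ℓ : ℕ} (hℓ : 1 ≤ ℓ) : Gd Δ ℓ v = 0 := by
  obtain ⟨k, rfl⟩ := Nat.exists_eq_add_of_le hℓ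
  rw [Gd, add_comm, pow_succ, Module.End.mul_apply, h, map_zero, smul_zero]

lemma Texp_of_deriv_zero {p : ℕ} (hp : 0 < p) {v : B} (h : Δ v = 0) :
    Texp Δ p v = Polynomial.C v := by
  rw [Texp, Finset.sum_eq_single 0]
  · rw [Gd_zero, pow_zero, mul_one]
  · intro ℓ _ hℓ
    rw [Gd_of_deriv_zero Δ h (by omega), map_zero, zero_mul]
  · intro h0
    exact absurd (Finset.mem_range.mpr hp) h0


end KeyMore

section TowerAll


variable (A : Type u) (B : Type u) [CommRing A] [CommRing B] [Algebra A B]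

/-- the ideal `(X^k)` of `B[X]`. -/
noncomputable def Iq (k : ℕ) : Ideal (Polynomial B) := Ideal.span {Polynomial.X ^ k}

lemma Iq_le {k k' : ℕ} (h : k ≤ k') : Iq B k' ≤ Iq B k := by
  rw [Iq, Iq, Ideal.span_singleton_le_span_singleton]
  exact pow_dvd_pow _ h

/-- the quotient `B[X]/(X^k)`. -/
abbrev Cq (k : ℕ) : Type u := Polynomial B ⧸ Iq B k

/-- image of `(X^k)` in `B[X]/(X^(k+1))`. -/
noncomputable def Jq (k : ℕ) : Ideal (Cq B (k+1)) :=
  (Iq B k).map (Ideal.Quotient.mkₐ A (Iq B (k+1)))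

lemma Jq_nilpotent {k : ℕ} (hk : 1 ≤ k) : IsNilpotent (Jq A B k) := by
  refine ⟨2, ?_⟩
  rw [Jq, ← Ideal.map_pow, Ideal.zero_eq_bot, Ideal.map_eq_bot_iff_le_ker]
  intro x hx
  rw [RingHom.mem_ker, Ideal.Quotient.mkₐ_eq_mk, Ideal.Quotient.eq_zero_iff_mem]
  revert x
  show Iq B k ^ 2 ≤ Iq B (k+1)
  rw [Iq, Iq, Ideal.span_singleton_pow,
    Ideal.span_singleton_le_span_singleton, ← pow_mul]
  exact pow_dvd_pow _ (by omega)

/-- third-isomorphism equiv. -/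
noncomputable def eqv (k : ℕ) : (Cq B (k+1) ⧸ Jq A B k) ≃ₐ[A] Cq B k :=
  DoubleQuot.quotQuotEquivQuotOfLEₐ A (Iq_le B (Nat.le_succ k))

lemma eqv_mk_mk (k : ℕ) (q : Polynomial B) :
    eqv A B k (Ideal.Quotient.mk (Jq A B k) (Ideal.Quotient.mk (Iq B (k+1)) q)) =
      Ideal.Quotient.mk (Iq B k) q := by
  have h0 : Ideal.Quotient.mk (Jq A B k) (Ideal.Quotient.mk (Iq B (k+1)) q) =
      DoubleQuot.quotQuotMkₐ A (Iq B (k+1)) (Iq B k) q := rfl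
  rw [eqv, h0]
  exact AlgHom.congr_fun
    (DoubleQuot.quotQuotEquivQuotOfLE_comp_quotQuotMkₐ A (Iq_le B (Nat.le_succ k))) q

variable (p : ℕ) [Algebra.FormallySmooth A B]

/-- The tower of lifts. -/
noncomputable def Φt (hp : 0 < p) (ψ : B →ₐ[A] Cq B p) : ∀ m : ℕ, B →ₐ[A] Cq B (p + m)
  | 0 => ψ
  | (m+1) => Algebra.FormallySmooth.lift (Jq A B (p+m))
      (Jq_nilpotent A B (by omega))
      ((eqv A B (p+m)).symm.toAlgHom.comp (Φt hp ψ m))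

lemma Φt_compat (hp : 0 < p) (ψ : B →ₐ[A] Cq B p) (m : ℕ) (g : B) (q : Polynomial B)
    (h : Φt A B p hp ψ (m+1) g = Ideal.Quotient.mk (Iq B (p+m+1)) q) :
    Φt A B p hp ψ m g = Ideal.Quotient.mk (Iq B (p+m)) q := by
  have h1 : Ideal.Quotient.mk (Jq A B (p+m)) (Φt A B p hp ψ (m+1) g) =
      (eqv A B (p+m)).symm (Φt A B p hp ψ m g) := by
    rw [Φt]
    exact Algebra.FormallySmooth.mk_lift _ _ _ g
  rw [h] at h1
  have := congrArg (eqv A B (p+m)) h1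
  rw [AlgEquiv.apply_symm_apply, eqv_mk_mk] at this
  exact this.symm
variable {B}
noncomputable def rep {k : ℕ} (x : Cq B k) : Polynomial B :=
  (Ideal.Quotient.mk_surjective x).choose

lemma mk_rep {k : ℕ} (x : Cq B k) : Ideal.Quotient.mk (Iq B k) (rep x) = x :=
  (Ideal.Quotient.mk_surjective x).choose_spec

lemma coeff_welldef {k : ℕ} {q q' : Polynomial B}
    (h : Ideal.Quotient.mk (Iq B k) q = Ideal.Quotient.mk (Iq B k) q')
    {ℓ : ℕ} (hℓ : ℓ < k) : q.coeff ℓ = q'.coeff ℓ := by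
  have hmem : q - q' ∈ Iq B k := Ideal.Quotient.eq.mp h
  rw [Iq, Ideal.mem_span_singleton] at hmem
  have := Polynomial.X_pow_dvd_iff.mp hmem ℓ hℓ
  rw [Polynomial.coeff_sub, sub_eq_zero] at this
  exact this

variable (B)

lemma algebraMap_Cq (k : ℕ) (a : A) :
    algebraMap A (Cq B k) a = Ideal.Quotient.mk (Iq B k) (Polynomial.C (algebraMap A B a)) := rfl

variable {B}
section Tower2
variable (p : ℕ) [Algebra.FormallySmooth A B] (hp : 0 < p) (ψ : B →ₐ[A] Cq B p)

/-- the higher derivation as a function -/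
noncomputable def Df (ℓ : ℕ) (g : B) : B :=
  (rep (Φt A B p hp ψ (ℓ+1) g)).coeff ℓ

lemma rep_coeff_step (m : ℕ) {ℓ : ℕ} (hℓ : ℓ < p + m) (g : B) :
    (rep (Φt A B p hp ψ m g)).coeff ℓ = (rep (Φt A B p hp ψ (m+1) g)).coeff ℓ := by
  have h1 : Φt A B p hp ψ m g =
      Ideal.Quotient.mk (Iq B (p+m)) (rep (Φt A B p hp ψ (m+1) g)) :=
    Φt_compat A B p hp ψ m g _ (mk_rep _).symm
  exact coeff_welldef ((mk_rep _).trans h1) hℓ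

lemma rep_coeff_mono (m : ℕ) {ℓ : ℕ} (hℓ : ℓ < p + m) (g : B) : ∀ d : ℕ,
    (rep (Φt A B p hp ψ m g)).coeff ℓ = (rep (Φt A B p hp ψ (m+d) g)).coeff ℓ := by
  intro d
  induction d with
  | zero => rfl
  | succ d IH => exact IH.trans (rep_coeff_step A p hp ψ (m+d) (by omega) g)

lemma Df_eq (m : ℕ) {ℓ : ℕ} (hℓ : ℓ < p + m) (g : B) :
    Df A p hp ψ ℓ g = (rep (Φt A B p hp ψ m g)).coeff ℓ := by
  rcases le_total (ℓ+1) m with h | h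
  · have e : (ℓ+1) + (m - (ℓ+1)) = m := by omega
    have h2 := rep_coeff_mono A p hp ψ (ℓ+1) (ℓ := ℓ) (by omega) g (m - (ℓ+1))
    rw [e] at h2
    exact h2
  · have e : m + ((ℓ+1) - m) = ℓ+1 := by omega
    have h2 := rep_coeff_mono A p hp ψ m hℓ g ((ℓ+1) - m)
    rw [e] at h2
    exact h2.symm

lemma Df_add (ℓ : ℕ) (a b : B) :
    Df A p hp ψ ℓ (a + b) = Df A p hp ψ ℓ a + Df A p hp ψ ℓ b := by
  have h1 : Ideal.Quotient.mk (Iq B (p+(ℓ+1))) (rep (Φt A B p hp ψ (ℓ+1) (a+b))) =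
      Ideal.Quotient.mk (Iq B (p+(ℓ+1)))
        (rep (Φt A B p hp ψ (ℓ+1) a) + rep (Φt A B p hp ψ (ℓ+1) b)) := by
    rw [mk_rep, map_add (Ideal.Quotient.mk (Iq B (p+(ℓ+1)))), mk_rep, mk_rep]
    exact map_add _ _ _
  have h2 := coeff_welldef h1 (show ℓ < p + (ℓ+1) by omega)
  rw [Polynomial.coeff_add] at h2
  exact h2

lemma Df_leibniz (ℓ : ℕ) (a b : B) :
    Df A p hp ψ ℓ (a * b) =
      ∑ ij ∈ Finset.HasAntidiagonal.antidiagonal ℓ, Df A p hp ψ ij.1 a * Df A p hp ψ ij.2 b := by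
  have h1 : Ideal.Quotient.mk (Iq B (p+(ℓ+1))) (rep (Φt A B p hp ψ (ℓ+1) (a*b))) =
      Ideal.Quotient.mk (Iq B (p+(ℓ+1)))
        (rep (Φt A B p hp ψ (ℓ+1) a) * rep (Φt A B p hp ψ (ℓ+1) b)) := by
    rw [mk_rep, map_mul (Ideal.Quotient.mk (Iq B (p+(ℓ+1)))), mk_rep, mk_rep]
    exact map_mul _ _ _
  have h2 := coeff_welldef h1 (show ℓ < p + (ℓ+1) by omega)
  rw [Polynomial.coeff_mul] at h2
  rw [Df_eq A p hp ψ (ℓ+1) (by omega) (a*b), h2]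
  refine Finset.sum_congr rfl fun ij hij => ?_
  rw [Finset.HasAntidiagonal.mem_antidiagonal] at hij
  rw [Df_eq A p hp ψ (ℓ+1) (show ij.1 < p + (ℓ+1) by omega) a,
    Df_eq A p hp ψ (ℓ+1) (show ij.2 < p + (ℓ+1) by omega) b]

lemma Df_algebraMap (ℓ : ℕ) (hℓ : 1 ≤ ℓ) (a : A) :
    Df A p hp ψ ℓ (algebraMap A B a) = 0 := by
  have h1 : Ideal.Quotient.mk (Iq B (p+(ℓ+1))) (rep (Φt A B p hp ψ (ℓ+1) (algebraMap A B a))) =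
      Ideal.Quotient.mk (Iq B (p+(ℓ+1))) (Polynomial.C (algebraMap A B a)) := by
    rw [mk_rep, AlgHom.commutes]
    exact algebraMap_Cq A B _ a
  have h2 := coeff_welldef h1 (show ℓ < p + (ℓ+1) by omega)
  rw [Polynomial.coeff_C, if_neg (by omega)] at h2
  exact h2

lemma Df_low {ℓ : ℕ} (hℓ : ℓ < p) (g : B) :
    Df A p hp ψ ℓ g = (rep (ψ g)).coeff ℓ := by
  have h := Df_eq A p hp ψ 0 (ℓ := ℓ) (by omega) g
  rw [h]
  rfl

section Rlin
variable {R : Type u} [CommRing R] [Algebra R A] [Algebra R B] [IsScalarTower R A B]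

lemma Df_smul (ℓ : ℕ) (r : R) (g : B) :
    Df A p hp ψ ℓ (r • g) = r • Df A p hp ψ ℓ g := by
  have e0 : r • g = algebraMap A B (algebraMap R A r) * g := by
    rw [← IsScalarTower.algebraMap_apply, Algebra.smul_def]
  have h1 : Ideal.Quotient.mk (Iq B (p+(ℓ+1))) (rep (Φt A B p hp ψ (ℓ+1) (r • g))) =
      Ideal.Quotient.mk (Iq B (p+(ℓ+1)))
        (Polynomial.C (algebraMap A B (algebraMap R A r)) * rep (Φt A B p hp ψ (ℓ+1) g)) := by
    rw [mk_rep, e0, map_mul, AlgHom.commutes, algebraMap_Cq,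
      map_mul (Ideal.Quotient.mk (Iq B (p+(ℓ+1)))), mk_rep]
  have h2 := coeff_welldef h1 (show ℓ < p + (ℓ+1) by omega)
  rw [Polynomial.coeff_C_mul, ← IsScalarTower.algebraMap_apply, ← Algebra.smul_def] at h2
  exact h2

end Rlin
end Tower2

end TowerAll

section MvP
variable {R : Type u} [CommRing R] {n : ℕ}
variable (Δ : MvPolynomial (Fin (n+1)) R →ₗ[R] MvPolynomial (Fin (n+1)) R) (p : ℕ)

noncomputable def Psi0 : MvPolynomial (Fin (n+1)) R →ₐ[R] Cq (MvPolynomial (Fin (n+1)) R) p :=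
  MvPolynomial.aeval (fun j => Ideal.Quotient.mk (Iq (MvPolynomial (Fin (n+1)) R) p)
    (Texp Δ p (MvPolynomial.X j)))

lemma algebraMap_Cq' (r : R) :
    algebraMap R (Cq (MvPolynomial (Fin (n+1)) R) p) r =
      Ideal.Quotient.mk (Iq (MvPolynomial (Fin (n+1)) R) p)
        (Polynomial.C (MvPolynomial.C r)) := rfl

lemma Psi0_eq (hp : 0 < p) (hfact : ∀ ℓ, ℓ < p → IsUnit ((ℓ.factorial : R)))
    (hmul : ∀ a b : MvPolynomial (Fin (n+1)) R, Δ (a * b) = a * Δ b + b * Δ a)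
    (g : MvPolynomial (Fin (n+1)) R) :
    Psi0 Δ p g = Ideal.Quotient.mk (Iq (MvPolynomial (Fin (n+1)) R) p) (Texp Δ p g) := by
  induction g using MvPolynomial.induction_on with
  | C r =>
      have hC : Δ (MvPolynomial.C r) = 0 := by
        rw [show (MvPolynomial.C r : MvPolynomial (Fin (n+1)) R) = algebraMap R _ r from rfl]
        exact deriv_algebraMap_zero Δ hmul r
      rw [Texp_of_deriv_zero Δ hp hC,
        show (MvPolynomial.C r : MvPolynomial (Fin (n+1)) R) = algebraMap R _ r from rfl,
        AlgHom.commutes]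
      exact algebraMap_Cq' p r
  | add a b ha hb => rw [map_add, ha, hb, Texp_add, map_add]
  | mul_X q j hq =>
      rw [map_mul, hq, show Psi0 Δ p (MvPolynomial.X j) =
          Ideal.Quotient.mk (Iq (MvPolynomial (Fin (n+1)) R) p) (Texp Δ p (MvPolynomial.X j))
          from MvPolynomial.aeval_X _ j, ← map_mul]
      symm
      exact (Ideal.Quotient.eq.mpr (Ideal.mem_span_singleton.mpr
        (Tmul Δ p hfact hmul q (MvPolynomial.X j)))).symm
end MvP

end JacAux

/-- Proposition 2.5. Let `R` be an integral domain of characteristic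
`p > 0`, `B = R[x_0, …, x_n]`, and `f 0, …, f (n-1) ∈ B` algebraically independent over
`R` with no `f i` in `R[x_0^p, …, x_n^p]`. If the natural inclusion
`R[f 0, …, f (n-1)] → B` is smooth (formally smooth), then there exists a higher
`R`-derivation on `B` of Jacobian type determined by `F = (f 0, …, f (n-1))`. -/
theorem stmt5 {R : Type u} [CommRing R] [IsDomain R] (p : ℕ) (hp : 0 < p) [CharP R p]
    {n : ℕ} (f : Fin n → MvPolynomial (Fin (n + 1)) R)
    (hnp : ∀ i, f i ∉ Algebra.adjoin R
      (Set.range fun j : Fin (n + 1) => (X j : MvPolynomial (Fin (n + 1)) R) ^ p))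
    (hind : AlgebraicIndependent R f)
    (hsm : Algebra.FormallySmooth (Algebra.adjoin R (Set.range f))
      (MvPolynomial (Fin (n + 1)) R)) :
    ∃ hd : HigherDerivation R (MvPolynomial (Fin (n + 1)) R),
      IsJacobianTypeF p hd f := by
  classical
  haveI : NeZero p := ⟨hp.ne'⟩
  have hprime : p.Prime := (CharP.char_is_prime_of_pos R p).out
  have hp2 : 2 ≤ p := hprime.two_le
  haveI : Fact p.Prime := ⟨hprime⟩
  have hfact : ∀ ℓ, ℓ < p → IsUnit ((ℓ.factorial : R)) := by
    intro ℓ hℓ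
    have hne : ((ℓ.factorial : ZMod p)) ≠ 0 := by
      rw [Ne, ZMod.natCast_eq_zero_iff]
      intro hdvd
      exact absurd ((Nat.Prime.dvd_factorial hprime).mp hdvd) (by omega)
    have hu := hne.isUnit.map (ZMod.castHom (dvd_refl p) R)
    rwa [map_natCast] at hu
  set Δ : MvPolynomial (Fin (n+1)) R →ₗ[R] MvPolynomial (Fin (n+1)) R := JacAux.jdL f with hΔ
  have hmul : ∀ a b, Δ (a*b) = a * Δ b + b * Δ a := JacAux.jd_mul f
  set A := Algebra.adjoin R (Set.range f) with hA
  haveI : Algebra.FormallySmooth A (MvPolynomial (Fin (n+1)) R) := hsm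
  have hAz : ∀ b ∈ A, Δ b = 0 := JacAux.deriv_adjoin_zero Δ hmul _
    (by rintro x ⟨i, rfl⟩; exact JacAux.jd_f f i)
  let ψf : MvPolynomial (Fin (n+1)) R →ₐ[A] JacAux.Cq (MvPolynomial (Fin (n+1)) R) p :=
    { toRingHom := (JacAux.Psi0 Δ p).toRingHom
      commutes' := by
        intro a
        show JacAux.Psi0 Δ p (algebraMap A _ a) = _
        have h1 : algebraMap A (MvPolynomial (Fin (n+1)) R) a =
            (a : MvPolynomial (Fin (n+1)) R) := rfl
        rw [h1, JacAux.Psi0_eq Δ p hp hfact hmul,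
          JacAux.Texp_of_deriv_zero Δ hp (hAz _ a.2), JacAux.algebraMap_Cq A _ p a]
        rfl }
  have hψ : ∀ g, ψf g = Ideal.Quotient.mk (JacAux.Iq (MvPolynomial (Fin (n+1)) R) p)
      (JacAux.Texp Δ p g) := fun g => JacAux.Psi0_eq Δ p hp hfact hmul g
  have hDlow : ∀ {ℓ : ℕ}, ℓ < p → ∀ g, JacAux.Df A p hp ψf ℓ g = JacAux.Gd Δ ℓ g := by
    intro ℓ hℓ g
    have h1 := JacAux.Df_low A p hp ψf hℓ g
    have h2 : Ideal.Quotient.mk (JacAux.Iq (MvPolynomial (Fin (n+1)) R) p)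
        (JacAux.rep (ψf g)) =
        Ideal.Quotient.mk (JacAux.Iq (MvPolynomial (Fin (n+1)) R) p) (JacAux.Texp Δ p g) := by
      rw [JacAux.mk_rep]; exact hψ g
    have h3 := JacAux.coeff_welldef h2 hℓ
    rw [h1, h3, JacAux.coeff_Texp, if_pos hℓ]
  refine ⟨⟨fun ℓ => ⟨⟨JacAux.Df A p hp ψf ℓ, JacAux.Df_add A p hp ψf ℓ⟩,
      fun r g => JacAux.Df_smul A p hp ψf ℓ r g⟩, ?_, ?_⟩, hind, ?_, ?_, ?_⟩
  · apply LinearMap.ext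
    intro g
    show JacAux.Df A p hp ψf 0 g = g
    rw [hDlow hp g, JacAux.Gd_zero]
  · intro ℓ a b
    exact JacAux.Df_leibniz A p hp ψf ℓ a b
  · intro i ℓ hℓ
    show JacAux.Df A p hp ψf ℓ (f i) = 0
    have h1 : f i = algebraMap A (MvPolynomial (Fin (n+1)) R)
        ⟨f i, Algebra.subset_adjoin ⟨i, rfl⟩⟩ := rfl
    rw [h1]
    exact JacAux.Df_algebraMap A p hp ψf ℓ hℓ _
  · intro g
    show JacAux.Df A p hp ψf 1 g = jacobianDerivF f g
    rw [hDlow (by omega) g, JacAux.Gd, Nat.factorial_one, Nat.cast_one, Ring.inverse_one,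
      one_smul, pow_one]
    rfl
  · intro ℓ hℓ g
    show ℓ.factorial • JacAux.Df A p hp ψf ℓ g = (jacobianDerivF f)^[ℓ] g
    rw [hDlow hℓ g, JacAux.Gd_iterate]
    have hco : ⇑Δ = jacobianDerivF f := rfl
    rw [hco, ← Nat.cast_smul_eq_nsmul R, smul_smul,
      Ring.mul_inverse_cancel _ (hfact ℓ hℓ), one_smul]
end

section
/- Let B = 𝔽_3[x,y] be the polynomial ring in two variables over the field with three elements, and let φ : B → B[t] be the 𝔽_3-algebra homomorphism determined by φ(x) = x + t³ and φ(y) = y + t. Then: (1) for every g ∈ B the constant coefficient of φ(g) is g, so the coefficient maps D_ℓ form a higher 𝔽_3-derivation D with φ_D = φ; (2) φ(x − y³) = x − y³, so x − y³ ∈ B^D; (3) D is locally finite and iterative; (4) D_1 = Δ_{x−y³} = ∂_y (since 3 = 0 in 𝔽_3) and 2!·D_2 = D_1 ∘ D_1. Hence D is an lfihd on B of Jacobian type determined by x − y³. -/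
open MvPolynomial

/-- The Jacobian derivation `Δ_h` on `k[x,y]`:
`Δ_h(g) = (∂h/∂x)(∂g/∂y) − (∂h/∂y)(∂g/∂x)`. -/
noncomputable def jacobianDeriv {k : Type*} [CommRing k]
    (h g : MvPolynomial (Fin 2) k) : MvPolynomial (Fin 2) k :=
  pderiv 0 h * pderiv 1 g - pderiv 1 h * pderiv 0 g

/-- `D` is of Jacobian type determined by `h` (in characteristic `p`): `h` is
non-constant, `h ∈ B^D`, `D_1 = Δ_h`, and `ℓ! • D_ℓ = Δ_h^[ℓ]` for `0 ≤ ℓ ≤ p-1`. -/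
def IsJacobianType {k : Type*} [CommRing k] (p : ℕ)
    (hd : HigherDerivation k (MvPolynomial (Fin 2) k))
    (h : MvPolynomial (Fin 2) k) : Prop :=
  (∀ c : k, h ≠ MvPolynomial.C c) ∧ h ∈ hd.kerSet ∧
    (∀ g, hd.D 1 g = jacobianDeriv h g) ∧
    ∀ ℓ : ℕ, ℓ < p → ∀ g, ℓ.factorial • hd.D ℓ g = (jacobianDeriv h)^[ℓ] g

/-- `f` is a variable of `k[x,y]`. -/
def IsVariable {k : Type*} [CommRing k] (f : MvPolynomial (Fin 2) k) : Prop :=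
  ∃ g : MvPolynomial (Fin 2) k,
    AlgebraicIndependent k ![f, g] ∧ Algebra.adjoin k {f, g} = ⊤

/-- The `𝔽₃`-algebra homomorphism `φ : 𝔽₃[x,y] → 𝔽₃[x,y][t]` determined by
`φ(x) = x + t³` and `φ(y) = y + t`. -/
noncomputable def phiEx : MvPolynomial (Fin 2) (ZMod 3) →ₐ[ZMod 3]
    Polynomial (MvPolynomial (Fin 2) (ZMod 3)) :=
  aeval ![Polynomial.C (X 0) + Polynomial.X ^ 3, Polynomial.C (X 1) + Polynomial.X]


section StmtSevenAux

private lemma phiEx_X0 : phiEx (X 0) = Polynomial.C (X 0) + Polynomial.X ^ 3 := by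
  simp [phiEx]

private lemma phiEx_X1 : phiEx (X 1) = Polynomial.C (X 1) + Polynomial.X := by
  simp [phiEx]

private lemma phiEx_coeff_zero (g : MvPolynomial (Fin 2) (ZMod 3)) :
    (phiEx g).coeff 0 = g := by
  induction g using MvPolynomial.induction_on with
  | C a => simp [phiEx]
  | add p q hp hq => simp [hp, hq]
  | mul_X p i hp =>
    rw [map_mul, Polynomial.mul_coeff_zero, hp]
    fin_cases i <;> simp [phiEx_X0, phiEx_X1]

private lemma coeff_mul_one' (p q : Polynomial (MvPolynomial (Fin 2) (ZMod 3))) :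
    (p * q).coeff 1 = p.coeff 0 * q.coeff 1 + p.coeff 1 * q.coeff 0 := by
  rw [Polynomial.coeff_mul, Finset.Nat.sum_antidiagonal_eq_sum_range_succ_mk]
  simp [Finset.sum_range_succ]

private lemma phiEx_coeff_one (g : MvPolynomial (Fin 2) (ZMod 3)) :
    (phiEx g).coeff 1 = pderiv 1 g := by
  induction g using MvPolynomial.induction_on with
  | C a => simp [phiEx]
  | add p q hp hq => simp [hp, hq]
  | mul_X p i hp =>
    rw [map_mul, coeff_mul_one', hp, phiEx_coeff_zero]
    fin_cases i <;>
      simp [phiEx_X0, phiEx_X1, Derivation.leibniz, pderiv_X_self, pderiv_X_of_ne,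
        mul_comm, smul_eq_mul]

private lemma phiEx_h : phiEx (X 0 - X 1 ^ 3) = Polynomial.C (X 0 - X 1 ^ 3) := by
  rw [map_sub, map_pow, phiEx_X0, phiEx_X1, add_pow_char, map_sub, ← Polynomial.C_pow]
  ring

private lemma pderiv0_h : pderiv 0 (X 0 - X 1 ^ 3 : MvPolynomial (Fin 2) (ZMod 3)) = 1 := by
  simp [pderiv_X_self, pderiv_X_of_ne, Derivation.leibniz_pow]

private lemma pderiv1_h : pderiv 1 (X 0 - X 1 ^ 3 : MvPolynomial (Fin 2) (ZMod 3)) = 0 := by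
  have h3 : (3 : MvPolynomial (Fin 2) (ZMod 3)) = 0 := by
    have := CharP.cast_eq_zero (MvPolynomial (Fin 2) (ZMod 3)) 3
    exact_mod_cast this
  simp [pderiv_X_self, pderiv_X_of_ne, Derivation.leibniz_pow, h3]

private lemma jac_eq (g : MvPolynomial (Fin 2) (ZMod 3)) :
    jacobianDeriv (X 0 - X 1 ^ 3) g = pderiv 1 g := by
  simp [jacobianDeriv, pderiv0_h, pderiv1_h]

private noncomputable def uEx : Polynomial (Polynomial (MvPolynomial (Fin 2) (ZMod 3))) :=
  Polynomial.C Polynomial.X + Polynomial.X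

private lemma coeff_aeval_u (p : Polynomial (MvPolynomial (Fin 2) (ZMod 3))) (i j : ℕ) :
    ((Polynomial.aeval uEx p).coeff j).coeff i = (i + j).choose j • p.coeff (i + j) := by
  induction p using Polynomial.induction_on' with
  | add p q hp hq => simp [hp, hq]
  | monomial n b =>
    rw [Polynomial.aeval_monomial, uEx, add_comm (Polynomial.C Polynomial.X)]
    rw [show (algebraMap (MvPolynomial (Fin 2) (ZMod 3))
          (Polynomial (Polynomial (MvPolynomial (Fin 2) (ZMod 3))))) b
        = Polynomial.C (Polynomial.C b) by
      rw [Polynomial.algebraMap_apply, Polynomial.algebraMap_apply]; simp]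
    rw [Polynomial.coeff_C_mul, Polynomial.coeff_X_add_C_pow, Polynomial.coeff_C_mul,
      ← Polynomial.C_eq_natCast, Polynomial.coeff_mul_C, Polynomial.coeff_X_pow,
      Polynomial.coeff_monomial]
    by_cases h : n = i + j
    · subst h
      simp [Nat.add_sub_cancel, nsmul_eq_mul, mul_comm]
    · have : ¬ (n - j = i) ∨ n.choose j = 0 := by
        by_cases hj : j ≤ n
        · left; omega
        · right; exact Nat.choose_eq_zero_of_lt (by omega)
      rcases this with h' | h'
      · have h'' : i ≠ n - j := fun hi => h' hi.symm
        simp [h, h', h'']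
      · simp [h, h']

private lemma key_comm :
    (Polynomial.mapAlgHom phiEx).comp phiEx
      = ((Polynomial.aeval uEx :
            Polynomial (MvPolynomial (Fin 2) (ZMod 3)) →ₐ[MvPolynomial (Fin 2) (ZMod 3)]
              Polynomial (Polynomial (MvPolynomial (Fin 2) (ZMod 3)))).restrictScalars
          (ZMod 3)).comp phiEx := by
  apply MvPolynomial.algHom_ext
  intro i
  have h3 : (3 : Polynomial (Polynomial (MvPolynomial (Fin 2) (ZMod 3)))) = 0 := by
    have := CharP.cast_eq_zero (Polynomial (Polynomial (MvPolynomial (Fin 2) (ZMod 3)))) 3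
    exact_mod_cast this
  fin_cases i <;>
    · simp [phiEx_X0, phiEx_X1, uEx, Polynomial.mapAlgHom, add_pow_char,
        Polynomial.algebraMap_apply]
      ring_nf
      all_goals simp [h3]

private lemma phiEx_iter (i j : ℕ) (g : MvPolynomial (Fin 2) (ZMod 3)) :
    (phiEx ((phiEx g).coeff j)).coeff i = (i + j).choose j • (phiEx g).coeff (i + j) := by
  have h := DFunLike.congr_fun key_comm g
  simp only [AlgHom.comp_apply, AlgHom.coe_restrictScalars'] at h
  have h2 : phiEx ((phiEx g).coeff j) = (Polynomial.mapAlgHom phiEx (phiEx g)).coeff j := by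
    simp [Polynomial.mapAlgHom, Polynomial.coeff_map]
  rw [h2, h, coeff_aeval_u]

private lemma phiEx_locfin (g : MvPolynomial (Fin 2) (ZMod 3)) :
    ∃ N : ℕ, ∀ ℓ : ℕ, N ≤ ℓ → (phiEx g).coeff ℓ = 0 := by
  refine ⟨(phiEx g).natDegree + 1, fun ℓ hℓ => ?_⟩
  exact Polynomial.coeff_eq_zero_of_natDegree_lt (by omega)

private noncomputable def hdEx : HigherDerivation (ZMod 3) (MvPolynomial (Fin 2) (ZMod 3)) where
  D ℓ := ((Polynomial.lcoeff (MvPolynomial (Fin 2) (ZMod 3)) ℓ).restrictScalars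
      (ZMod 3)).comp phiEx.toLinearMap
  D_zero := by
    apply LinearMap.ext
    intro g
    simpa using phiEx_coeff_zero g
  leibniz ℓ a b := by
    simp [map_mul, Polynomial.coeff_mul]

private lemma hdEx_D (ℓ : ℕ) (g : MvPolynomial (Fin 2) (ZMod 3)) :
    hdEx.D ℓ g = (phiEx g).coeff ℓ := rfl

private lemma pderiv_sq (g : MvPolynomial (Fin 2) (ZMod 3)) :
    pderiv 1 (pderiv 1 g) = Nat.factorial 2 • (phiEx g).coeff 2 := by
  have h := phiEx_iter 1 1 g
  rw [phiEx_coeff_one, phiEx_coeff_one] at h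
  exact h

end StmtSevenAux

/-- Example 2.7. For `φ : 𝔽₃[x,y] → 𝔽₃[x,y][t]` with `φ(x) = x + t³`,
`φ(y) = y + t`, setting `D ℓ g := coeff ℓ (φ g)`:
(1) the constant coefficient of `φ(g)` is `g`; (2) `φ(x − y³) = x − y³`;
(3) `D` is locally finite and iterative; (4) `D 1 = ∂_y = Δ_{x−y³}` and
`2! • D 2 = D 1 ∘ D 1`. Hence there is an lfihd on `𝔽₃[x,y]` with `D ℓ = coeff ℓ ∘ φ`
which is of Jacobian type determined by `x − y³`. -/
theorem stmt7 :
    (∀ g : MvPolynomial (Fin 2) (ZMod 3), (phiEx g).coeff 0 = g) ∧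
    (phiEx (X 0 - X 1 ^ 3) = Polynomial.C (X 0 - X 1 ^ 3)) ∧
    (∀ g : MvPolynomial (Fin 2) (ZMod 3),
        ∃ N : ℕ, ∀ ℓ : ℕ, N ≤ ℓ → (phiEx g).coeff ℓ = 0) ∧
    (∀ (i j : ℕ) (g : MvPolynomial (Fin 2) (ZMod 3)),
        (phiEx ((phiEx g).coeff j)).coeff i = (i + j).choose j • (phiEx g).coeff (i + j)) ∧
    (∀ g : MvPolynomial (Fin 2) (ZMod 3),
        (phiEx g).coeff 1 = pderiv 1 g ∧ (phiEx g).coeff 1 = jacobianDeriv (X 0 - X 1 ^ 3) g) ∧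
    (∀ g : MvPolynomial (Fin 2) (ZMod 3),
        (Nat.factorial 2) • (phiEx g).coeff 2 = (phiEx ((phiEx g).coeff 1)).coeff 1) ∧
    (∃ hd : HigherDerivation (ZMod 3) (MvPolynomial (Fin 2) (ZMod 3)),
        (∀ (ℓ : ℕ) (g : MvPolynomial (Fin 2) (ZMod 3)), hd.D ℓ g = (phiEx g).coeff ℓ) ∧
        hd.LocallyFinite ∧ hd.Iterative ∧ IsJacobianType 3 hd (X 0 - X 1 ^ 3)) := by
  refine ⟨phiEx_coeff_zero, phiEx_h, phiEx_locfin, phiEx_iter, ?_, ?_, ?_⟩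
  · intro g
    exact ⟨phiEx_coeff_one g, (phiEx_coeff_one g).trans (jac_eq g).symm⟩
  · intro g
    rw [phiEx_coeff_one, phiEx_coeff_one, ← pderiv_sq]
  · refine ⟨hdEx, hdEx_D, ?_, ?_, ?_, ?_, ?_, ?_⟩
    · intro b
      obtain ⟨N, hN⟩ := phiEx_locfin b
      exact ⟨N, fun ℓ hℓ => by rw [hdEx_D]; exact hN ℓ hℓ⟩
    · intro i j b
      rw [hdEx_D, hdEx_D, hdEx_D, phiEx_iter]
    · intro c hc
      have h := congrArg (pderiv 0) hc
      rw [pderiv0_h] at h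
      simp at h
    · intro ℓ hℓ
      rw [hdEx_D, phiEx_h, Polynomial.coeff_C, if_neg (by omega)]
    · intro g
      rw [hdEx_D, phiEx_coeff_one, jac_eq]
    · intro ℓ hℓ g
      interval_cases ℓ
      · simpa [hdEx_D] using phiEx_coeff_zero g
      · simpa [hdEx_D, jac_eq] using phiEx_coeff_one g
      · rw [hdEx_D, ← pderiv_sq]
        simp [Function.iterate_succ_apply', jac_eq]
end

section
/- Let R be an integral domain of characteristic p > 0, let B = R[x_1,…,x_n] be the polynomial ring in n variables over R, and let F = (f_1,…,f_{n-1}) ∈ B^{n-1}. If F is extendable, then there exists a locally finite iterative higher R-derivation (lfihd) D on B which is of Jacobian type determined by F, satisfies B^D = R[f_1,…,f_{n-1}], and has a slice. -/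
open MvPolynomial

section MvHasse

variable {R : Type*} [CommRing R] {n : ℕ}

/-- Hasse derivative in the variable `0` on `MvPolynomial (Fin (n+1)) R`. -/
noncomputable def mvHasse (ℓ : ℕ) :
    MvPolynomial (Fin (n+1)) R →ₗ[R] MvPolynomial (Fin (n+1)) R :=
  ((MvPolynomial.finSuccEquiv R n).symm.toLinearMap.comp
    ((Polynomial.hasseDeriv ℓ).restrictScalars R)).comp
      (MvPolynomial.finSuccEquiv R n).toLinearMap

lemma mvHasse_apply (ℓ : ℕ) (q : MvPolynomial (Fin (n+1)) R) :
    mvHasse ℓ q = (MvPolynomial.finSuccEquiv R n).symm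
      (Polynomial.hasseDeriv ℓ (MvPolynomial.finSuccEquiv R n q)) := rfl

lemma mvHasse_zero (q : MvPolynomial (Fin (n+1)) R) : mvHasse 0 q = q := by
  simp [mvHasse_apply, Polynomial.hasseDeriv_zero']

lemma mvHasse_mul (ℓ : ℕ) (a b : MvPolynomial (Fin (n+1)) R) :
    mvHasse ℓ (a * b) =
      ∑ ij ∈ Finset.HasAntidiagonal.antidiagonal ℓ, mvHasse ij.1 a * mvHasse ij.2 b := by
  simp only [mvHasse_apply, map_mul, Polynomial.hasseDeriv_mul, map_sum]

lemma mvHasse_comp (i j : ℕ) (b : MvPolynomial (Fin (n+1)) R) :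
    mvHasse i (mvHasse j b) = (i + j).choose i • mvHasse (i + j) b := by
  simp only [mvHasse_apply, AlgEquiv.apply_symm_apply]
  rw [show (Polynomial.hasseDeriv i) ((Polynomial.hasseDeriv j)
      ((MvPolynomial.finSuccEquiv R n) b)) = ((i + j).choose i • Polynomial.hasseDeriv (i + j))
      ((MvPolynomial.finSuccEquiv R n) b) from
    LinearMap.congr_fun (Polynomial.hasseDeriv_comp i j) _]
  rw [LinearMap.smul_apply, map_nsmul]

lemma hasseDeriv_eq_zero_of_natDegree_lt {A : Type*} [CommRing A] (p : Polynomial A) (ℓ : ℕ)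
    (h : p.natDegree < ℓ) : Polynomial.hasseDeriv ℓ p = 0 := by
  ext m
  rw [Polynomial.hasseDeriv_coeff, Polynomial.coeff_eq_zero_of_natDegree_lt
    (lt_of_lt_of_le h (Nat.le_add_left _ _)), mul_zero, Polynomial.coeff_zero]

lemma mvHasse_eq_zero_of_lt (q : MvPolynomial (Fin (n+1)) R) (ℓ : ℕ)
    (h : (MvPolynomial.finSuccEquiv R n q).natDegree < ℓ) : mvHasse ℓ q = 0 := by
  rw [mvHasse_apply, hasseDeriv_eq_zero_of_natDegree_lt _ _ h, map_zero]

lemma finSuccEquiv_pderiv_zero (q : MvPolynomial (Fin (n+1)) R) :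
    MvPolynomial.finSuccEquiv R n (pderiv 0 q) =
      Polynomial.derivative (MvPolynomial.finSuccEquiv R n q) := by
  induction q using MvPolynomial.induction_on with
  | C a =>
      have : MvPolynomial.finSuccEquiv R n (MvPolynomial.C a) =
          Polynomial.C (MvPolynomial.C a) := by
        simp [MvPolynomial.finSuccEquiv_apply]
      simp [this]
  | add p q hp hq => simp [map_add, hp, hq]
  | mul_X p i hp =>
      rw [pderiv_mul, map_add, map_mul, map_mul, map_mul, Polynomial.derivative_mul]
      induction i using Fin.cases with
      | zero =>
          rw [pderiv_X_self, MvPolynomial.finSuccEquiv_X_zero, map_one, hp,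
            Polynomial.derivative_X]
      | succ j =>
          rw [pderiv_X_of_ne (Fin.succ_ne_zero j), MvPolynomial.finSuccEquiv_X_succ, hp]
          simp

lemma mvHasse_one (q : MvPolynomial (Fin (n+1)) R) : mvHasse 1 q = pderiv 0 q := by
  rw [mvHasse_apply, Polynomial.hasseDeriv_one', ← finSuccEquiv_pderiv_zero,
    AlgEquiv.symm_apply_apply]

lemma finSuccEquiv_rename_succ (q : MvPolynomial (Fin n) R) :
    MvPolynomial.finSuccEquiv R n (rename Fin.succ q) = Polynomial.C q := by
  induction q using MvPolynomial.induction_on with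
  | C a =>
      have : MvPolynomial.finSuccEquiv R n (MvPolynomial.C a) =
          Polynomial.C (MvPolynomial.C a) := by
        simp [MvPolynomial.finSuccEquiv_apply]
      simp [this]
  | add p q hp hq => simp [map_add, hp, hq]
  | mul_X p i hp => simp [map_mul, hp, MvPolynomial.finSuccEquiv_X_succ]

lemma mvHasse_rename_succ (ℓ : ℕ) (hℓ : 0 < ℓ) (q : MvPolynomial (Fin n) R) :
    mvHasse ℓ (rename Fin.succ q) = 0 := by
  rw [mvHasse_apply, finSuccEquiv_rename_succ, Polynomial.hasseDeriv_C _ _ hℓ, map_zero]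

lemma exists_rename_of_mvHasse_eq_zero (q : MvPolynomial (Fin (n+1)) R)
    (h : ∀ ℓ : ℕ, 1 ≤ ℓ → mvHasse ℓ q = 0) :
    ∃ q' : MvPolynomial (Fin n) R, q = rename Fin.succ q' := by
  set p := MvPolynomial.finSuccEquiv R n q with hp
  have hc : ∀ k : ℕ, 1 ≤ k → p.coeff k = 0 := by
    intro k hk
    have h0 : Polynomial.hasseDeriv k p = 0 := by
      have := h k hk
      rw [mvHasse_apply] at this
      have := congrArg (MvPolynomial.finSuccEquiv R n) this
      rwa [AlgEquiv.apply_symm_apply, map_zero] at this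
    have := congrArg (fun r => Polynomial.coeff r 0) h0
    simpa [Polynomial.hasseDeriv_coeff] using this
  have hpc : p = Polynomial.C (p.coeff 0) := by
    ext m
    rcases Nat.eq_zero_or_pos m with rfl | hm
    · simp
    · rw [hc m hm, Polynomial.coeff_C, if_neg (by omega)]
  refine ⟨p.coeff 0, ?_⟩
  apply (MvPolynomial.finSuccEquiv R n).injective
  rw [finSuccEquiv_rename_succ, ← hp]
  exact hpc

lemma finSuccEquiv_pderiv_zero_iterate (ℓ : ℕ) (q : MvPolynomial (Fin (n+1)) R) :
    MvPolynomial.finSuccEquiv R n ((pderiv (0 : Fin (n+1)))^[ℓ] q) =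
      (Polynomial.derivative (R := MvPolynomial (Fin n) R))^[ℓ]
        (MvPolynomial.finSuccEquiv R n q) := by
  induction ℓ generalizing q with
  | zero => simp
  | succ m ih =>
      rw [Function.iterate_succ_apply, Function.iterate_succ_apply, ih,
        finSuccEquiv_pderiv_zero]

lemma mvHasse_factorial (ℓ : ℕ) (q : MvPolynomial (Fin (n+1)) R) :
    ℓ.factorial • mvHasse ℓ q = (pderiv (0 : Fin (n+1)))^[ℓ] q := by
  apply (MvPolynomial.finSuccEquiv R n).injective
  rw [map_nsmul, mvHasse_apply, AlgEquiv.apply_symm_apply, finSuccEquiv_pderiv_zero_iterate]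
  rw [← congr_fun (Polynomial.factorial_smul_hasseDeriv ℓ)
    (MvPolynomial.finSuccEquiv R n q)]
  rw [LinearMap.smul_apply]

end MvHasse

section Units

lemma mvpoly_unit_eq_C {R : Type*} [CommRing R] [IsDomain R] :
    ∀ {n : ℕ} {q : MvPolynomial (Fin n) R}, IsUnit q →
      ∃ r : R, IsUnit r ∧ MvPolynomial.C r = q := by
  intro n
  induction n with
  | zero =>
      intro q hq
      refine ⟨MvPolynomial.isEmptyAlgEquiv R (Fin 0) q, hq.map _, ?_⟩
      apply (MvPolynomial.isEmptyAlgEquiv R (Fin 0)).injective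
      rw [show ((MvPolynomial.isEmptyAlgEquiv R (Fin 0))
          (MvPolynomial.C ((MvPolynomial.isEmptyAlgEquiv R (Fin 0)) q))) =
          (MvPolynomial.isEmptyAlgEquiv R (Fin 0)) q from
        (MvPolynomial.isEmptyAlgEquiv R (Fin 0)).commutes _]
  | succ m ih =>
      intro q hq
      have h1 : IsUnit (MvPolynomial.finSuccEquiv R m q) := hq.map _
      obtain ⟨q', hq', hCq'⟩ := Polynomial.isUnit_iff.mp h1
      obtain ⟨r, hr, hCr⟩ := ih hq'
      refine ⟨r, hr, ?_⟩
      apply (MvPolynomial.finSuccEquiv R m).injective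
      have : MvPolynomial.finSuccEquiv R m (MvPolynomial.C r) =
          Polynomial.C (MvPolynomial.C r) := by
        simp [MvPolynomial.finSuccEquiv_apply]
      rw [this, hCr, hCq']

end Units

section ChainRule

lemma pderiv_aeval_eq {R : Type*} [CommRing R] {n : ℕ}
    (u : Fin n → MvPolynomial (Fin n) R) (j : Fin n) (q : MvPolynomial (Fin n) R) :
    MvPolynomial.pderiv j (MvPolynomial.aeval u q) =
      ∑ k, MvPolynomial.aeval u (MvPolynomial.pderiv k q) * MvPolynomial.pderiv j (u k) := by
  induction q using MvPolynomial.induction_on with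
  | C a => simp
  | add p q hp hq =>
      simp only [map_add, hp, hq, ← Finset.sum_add_distrib, add_mul]
  | mul_X p i hp =>
      rw [map_mul, MvPolynomial.aeval_X, MvPolynomial.pderiv_mul, hp, Finset.sum_mul]
      have hsplit : ∀ k : Fin n,
          MvPolynomial.aeval u (MvPolynomial.pderiv k (p * MvPolynomial.X i)) *
              MvPolynomial.pderiv j (u k) =
            MvPolynomial.aeval u (MvPolynomial.pderiv k p) * MvPolynomial.pderiv j (u k) * u i +
            (if k = i then MvPolynomial.aeval u p * MvPolynomial.pderiv j (u i) else 0) := by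
        intro k
        rw [MvPolynomial.pderiv_mul, map_add, map_mul, map_mul, MvPolynomial.aeval_X, add_mul]
        congr 1
        · ring
        · rcases eq_or_ne k i with rfl | hk
          · rw [if_pos rfl, MvPolynomial.pderiv_X_self, map_one, mul_one]
          · rw [if_neg hk, MvPolynomial.pderiv_X_of_ne (Ne.symm hk), map_zero, mul_zero,
              zero_mul]
      rw [Finset.sum_congr rfl (fun k _ => hsplit k), Finset.sum_add_distrib,
        Finset.sum_ite_eq' Finset.univ i
          (fun _ => MvPolynomial.aeval u p * MvPolynomial.pderiv j (u i)),
        if_pos (Finset.mem_univ i)]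

end ChainRule

section DetLemma

open MvPolynomial

variable {R : Type*} [CommRing R] {n : ℕ}

lemma jac_det_eq (f : Fin n → MvPolynomial (Fin (n+1)) R) (s : MvPolynomial (Fin (n+1)) R)
    (q : MvPolynomial (Fin (n+1)) R) :
    jacobianDerivF f (aeval (Fin.cons s f) q) =
      aeval (Fin.cons s f) (pderiv 0 q) *
        ((-1 : MvPolynomial (Fin (n+1)) R) ^ n *
          Matrix.det (Matrix.of fun k j : Fin (n+1) =>
            pderiv j ((Fin.cons s f : Fin (n+1) → MvPolynomial (Fin (n+1)) R) k))) := by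
  classical
  let B := MvPolynomial (Fin (n+1)) R
  set u : Fin (n+1) → B := Fin.cons s f with hu
  set N : Matrix (Fin (n+1)) (Fin (n+1)) B := Matrix.of fun k j => pderiv j (u k) with hN
  set v : Fin (n+1) → B := fun k => aeval u (pderiv k q) with hv
  set A : Matrix (Fin (n+1)) (Fin (n+1)) B := Matrix.of fun i k =>
    Fin.lastCases (v k) (fun i' : Fin n => if k = Fin.succ i' then (1:B) else 0) i with hA
  have step1 : (Matrix.of fun i j : Fin (n + 1) =>
      Fin.lastCases (pderiv j (aeval u q)) (fun i' : Fin n => pderiv j (f i')) i) = A * N := by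
    refine Matrix.ext fun i j => ?_
    rw [Matrix.mul_apply]
    refine Fin.lastCases ?_ ?_ i
    · simp only [Matrix.of_apply, Fin.lastCases_last, hA, hN]
      exact pderiv_aeval_eq u j q
    · intro i'
      simp only [Matrix.of_apply, Fin.lastCases_castSucc, hA, hN]
      rw [Finset.sum_congr rfl (fun k _ => by rw [ite_mul, one_mul, zero_mul]),
        Finset.sum_ite_eq' Finset.univ (Fin.succ i') (fun k => pderiv j (u k)),
        if_pos (Finset.mem_univ _)]
      rw [hu, Fin.cons_succ]
  have hPapp : ∀ i k, (finRotate (n+1)).permMatrix B i k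
      = if finRotate (n+1) i = k then (1:B) else 0 := by
    intro i k
    simp [Equiv.Perm.permMatrix, PEquiv.toMatrix_apply, Equiv.toPEquiv_apply, Option.mem_def]
  have step2 : A = ((finRotate (n+1)).permMatrix B).updateRow (Fin.last n) v := by
    ext i k
    rw [Matrix.updateRow_apply]
    refine Fin.lastCases ?_ ?_ i
    · rw [if_pos rfl]; simp [hA]
    · intro i'
      rw [if_neg (Fin.castSucc_lt_last i').ne, hPapp]
      simp only [hA, Matrix.of_apply, Fin.lastCases_castSucc]
      rw [finRotate_succ_apply, Fin.coeSucc_eq_succ]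
      by_cases h : k = Fin.succ i'
      · rw [if_pos h, if_pos h.symm]
      · rw [if_neg h, if_neg (Ne.symm h)]
  have step3 : v = ∑ i, v (finRotate (n+1) i) • ((finRotate (n+1)).permMatrix B) i := by
    funext k
    rw [Finset.sum_apply]
    have : ∀ i, (v (finRotate (n+1) i) • ((finRotate (n+1)).permMatrix B) i) k
        = (fun m => v m * (if m = k then (1:B) else 0)) (finRotate (n+1) i) := by
      intro i
      rw [Pi.smul_apply, smul_eq_mul, hPapp]
    rw [Finset.sum_congr rfl (fun i _ => this i),
      Equiv.sum_comp (finRotate (n+1)) (fun m => v m * if m = k then (1:B) else 0)]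
    rw [Finset.sum_congr rfl (fun m _ => by rw [mul_ite, mul_one, mul_zero]),
      Finset.sum_ite_eq' Finset.univ k v, if_pos (Finset.mem_univ _)]
  have step4 : A.det = v 0 * (-1 : B) ^ n := by
    rw [step2]
    conv_lhs => rw [step3]
    rw [Matrix.det_updateRow_sum, finRotate_last, Matrix.det_permutation, sign_finRotate]
    rw [smul_eq_mul]
    norm_num
  show Matrix.det _ = _
  rw [step1, Matrix.det_mul, step4]
  rw [hv]
  ring

end DetLemma

universe u

/-- Theorem 2.8, (i) ⟹ (ii). Let `R` be an integral domain of
characteristic `p > 0`, `B = R[x_0, …, x_n]`, and `F = (f 0, …, f (n-1)) ∈ Bⁿ`.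
If `F` is extendable, then there exists a locally finite iterative higher
`R`-derivation `D` on `B` of Jacobian type determined by `F` with
`B^D = R[f 0, …, f (n-1)]` which has a slice. -/
theorem stmt9 {R : Type u} [CommRing R] [IsDomain R] (p : ℕ) (hp : 0 < p) [CharP R p]
    {n : ℕ} (f : Fin n → MvPolynomial (Fin (n + 1)) R)
    (hext : Extendable f) :
    ∃ hd : HigherDerivation R (MvPolynomial (Fin (n + 1)) R),
      hd.LocallyFinite ∧ hd.Iterative ∧ IsJacobianTypeF p hd f ∧
      hd.kerSet = ↑(Algebra.adjoin R (Set.range f)) ∧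
      ∃ s : MvPolynomial (Fin (n + 1)) R, hd.IsSlice s := by
  classical
  obtain ⟨s, hind, hadj⟩ := hext
  set u : Fin (n+1) → MvPolynomial (Fin (n+1)) R := Fin.cons s f with hu
  have hcu : (Fin.snoc f s : Fin (n+1) → MvPolynomial (Fin (n+1)) R) ∘
      ⇑(finRotate (n+1)).symm = u := by
    funext i
    refine Fin.cases ?_ ?_ i
    · have h0 : (finRotate (n+1)).symm 0 = Fin.last n := by
        rw [Equiv.symm_apply_eq, finRotate_last]
      simp only [Function.comp_apply]
      rw [h0, Fin.snoc_last, hu, Fin.cons_zero]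
    · intro j
      have hj : (finRotate (n+1)).symm (Fin.succ j) = Fin.castSucc j := by
        rw [Equiv.symm_apply_eq, finRotate_succ_apply, Fin.coeSucc_eq_succ]
      simp only [Function.comp_apply]
      rw [hj, Fin.snoc_castSucc, hu, Fin.cons_succ]
  have hAIu : AlgebraicIndependent R u := by
    have := hind.comp (⇑(finRotate (n+1)).symm) (Equiv.injective _)
    rwa [hcu] at this
  have hinj : Function.Injective (MvPolynomial.aeval (R := R) u) :=
    algebraicIndependent_iff_injective_aeval.mp hAIu
  have hsurj : Function.Surjective (MvPolynomial.aeval (R := R) u) := by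
    rw [← AlgHom.range_eq_top, ← Algebra.adjoin_range_eq_range_aeval]
    have hrange : Set.range u = Set.range (Fin.snoc f s) := by
      rw [← hcu]
      exact ((finRotate (n+1)).symm.surjective).range_comp _
    rw [hrange, hadj]
  set e : MvPolynomial (Fin (n+1)) R ≃ₐ[R] MvPolynomial (Fin (n+1)) R :=
    AlgEquiv.ofBijective (MvPolynomial.aeval u) ⟨hinj, hsurj⟩ with he'
  have he : ∀ x, e x = MvPolynomial.aeval u x := fun _ => rfl
  set N : Matrix (Fin (n+1)) (Fin (n+1)) (MvPolynomial (Fin (n+1)) R) :=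
    Matrix.of fun k j => MvPolynomial.pderiv j (u k) with hN
  have hNN' : (Matrix.of fun k m =>
      MvPolynomial.aeval u (MvPolynomial.pderiv m (e.symm (MvPolynomial.X k)))) * N = 1 := by
    refine Matrix.ext fun k j => ?_
    rw [Matrix.mul_apply]
    have hterm : ∀ m, (Matrix.of fun k m =>
        MvPolynomial.aeval u (MvPolynomial.pderiv m (e.symm (MvPolynomial.X k)))) k m * N m j
        = MvPolynomial.aeval u (MvPolynomial.pderiv m (e.symm (MvPolynomial.X k))) *
            MvPolynomial.pderiv j (u m) := fun m => rfl
    rw [Finset.sum_congr rfl fun m _ => hterm m,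
      ← pderiv_aeval_eq u j (e.symm (MvPolynomial.X k))]
    have hXk : MvPolynomial.aeval u (e.symm (MvPolynomial.X k)) = MvPolynomial.X k :=
      e.apply_symm_apply (MvPolynomial.X k)
    rw [hXk, MvPolynomial.pderiv_X, Matrix.one_apply, Pi.single_apply]
  have hJu : IsUnit ((-1 : MvPolynomial (Fin (n+1)) R) ^ n * N.det) := by
    have h2 := congrArg Matrix.det hNN'
    rw [Matrix.det_mul, Matrix.det_one] at h2
    exact ((isUnit_one.neg).pow n).mul (IsUnit.of_mul_eq_one _ (by rw [mul_comm]; exact h2))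
  obtain ⟨r, hr, hCr⟩ := mvpoly_unit_eq_C hJu
  have hstar : ∀ b, jacobianDerivF f b =
      r • e (MvPolynomial.pderiv 0 (e.symm b)) := by
    intro b
    have hb : MvPolynomial.aeval u (e.symm b) = b := e.apply_symm_apply b
    conv_lhs => rw [← hb, hu]
    rw [jac_det_eq f s (e.symm b), ← hu, ← hCr, he]
    rw [MvPolynomial.smul_eq_C_mul]
    ring
  let hd : HigherDerivation R (MvPolynomial (Fin (n+1)) R) :=
    { D := fun ℓ => r ^ ℓ • (e.toLinearMap ∘ₗ (mvHasse ℓ) ∘ₗ e.symm.toLinearMap)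
      D_zero := by
        refine LinearMap.ext fun b => ?_
        show r ^ 0 • e (mvHasse 0 (e.symm b)) = b
        rw [pow_zero, one_smul, mvHasse_zero, AlgEquiv.apply_symm_apply]
      leibniz := by
        intro ℓ a b
        show r ^ ℓ • e (mvHasse ℓ (e.symm (a * b))) = _
        rw [map_mul, mvHasse_mul, map_sum, Finset.smul_sum]
        refine Finset.sum_congr rfl fun ij hij => ?_
        show r ^ ℓ • e (mvHasse ij.1 (e.symm a) * mvHasse ij.2 (e.symm b)) =
          (r ^ ij.1 • e (mvHasse ij.1 (e.symm a))) * (r ^ ij.2 • e (mvHasse ij.2 (e.symm b)))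
        rw [map_mul, show ℓ = ij.1 + ij.2 from (Finset.HasAntidiagonal.mem_antidiagonal.mp hij).symm,
          pow_add, mul_smul, smul_mul_assoc, mul_smul_comm] }
  have hD : ∀ (ℓ : ℕ) b, hd.D ℓ b = r ^ ℓ • e (mvHasse ℓ (e.symm b)) := fun _ _ => rfl
  have hlf : hd.LocallyFinite := by
    intro b
    refine ⟨(MvPolynomial.finSuccEquiv R n (e.symm b)).natDegree + 1, fun ℓ hℓ => ?_⟩
    rw [hD, mvHasse_eq_zero_of_lt _ _ (by omega), map_zero, smul_zero]
  have hit : hd.Iterative := by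
    intro i j b
    rw [hD, hD, hD, map_smul, AlgEquiv.symm_apply_apply, map_smul, mvHasse_comp,
      map_smul, map_nsmul, smul_comm (r ^ j) ((i + j).choose i),
      smul_comm (r ^ i) ((i + j).choose i), smul_smul, ← pow_add, Nat.choose_symm_add]
  have hAIf : AlgebraicIndependent R f := by
    have h1 := hind.comp Fin.castSucc (Fin.castSucc_injective _)
    rwa [Fin.snoc_comp_castSucc] at h1
  have hker : hd.kerSet = ↑(Algebra.adjoin R (Set.range f)) := by
    have hDzero : ∀ (ℓ : ℕ) b, (hd.D ℓ b = 0 ↔ mvHasse ℓ (e.symm b) = 0) := by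
      intro ℓ b
      constructor
      · intro h
        rw [hD, MvPolynomial.smul_eq_C_mul] at h
        have hCu : IsUnit (MvPolynomial.C (σ := Fin (n+1)) (r ^ ℓ)) :=
          (hr.pow ℓ).map (MvPolynomial.C : R →+* MvPolynomial (Fin (n+1)) R)
        have h2 : e (mvHasse ℓ (e.symm b)) = 0 := by
          exact (IsUnit.mul_right_eq_zero hCu).mp h
        exact e.injective (h2.trans (map_zero e).symm)
      · intro h
        rw [hD, h, map_zero, smul_zero]
    have hufsucc : u ∘ Fin.succ = f := funext fun i => by
      rw [Function.comp_apply, hu, Fin.cons_succ]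
    ext b
    constructor
    · intro hb
      obtain ⟨q', hq'⟩ := exists_rename_of_mvHasse_eq_zero (e.symm b)
        (fun ℓ hℓ => (hDzero ℓ b).mp (hb ℓ hℓ))
      have hbq : MvPolynomial.aeval f q' = b := by
        have h3 : e (MvPolynomial.rename Fin.succ q') = b := by
          rw [← hq', AlgEquiv.apply_symm_apply]
        rw [← h3, he, MvPolynomial.aeval_rename, hufsucc]
      rw [SetLike.mem_coe, Algebra.adjoin_range_eq_range_aeval]
      exact ⟨q', hbq⟩
    · intro hb
      rw [SetLike.mem_coe, Algebra.adjoin_range_eq_range_aeval] at hb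
      obtain ⟨q', hq'⟩ := hb
      have hsb : e.symm b = MvPolynomial.rename Fin.succ q' := by
        apply e.injective
        rw [AlgEquiv.apply_symm_apply, he, MvPolynomial.aeval_rename, hufsucc]
        exact hq'.symm
      intro ℓ hℓ
      refine (hDzero ℓ b).mpr ?_
      rw [hsb]
      exact mvHasse_rename_succ ℓ hℓ q'
  have hD1 : ∀ g, hd.D 1 g = jacobianDerivF f g := by
    intro g
    rw [hD, hstar g, pow_one, mvHasse_one]
  have hiterate : ∀ (ℓ : ℕ) (g : MvPolynomial (Fin (n+1)) R), (jacobianDerivF f)^[ℓ] g =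
      r ^ ℓ • e ((MvPolynomial.pderiv (0 : Fin (n+1)))^[ℓ] (e.symm g)) := by
    intro ℓ
    induction ℓ with
    | zero => intro g; simp
    | succ m ih =>
        intro g
        have h1 : e.symm (r ^ m • e ((pderiv (0 : Fin (n+1)))^[m] (e.symm g))) =
            r ^ m • (pderiv (0 : Fin (n+1)))^[m] (e.symm g) := by
          rw [map_smul, AlgEquiv.symm_apply_apply]
        rw [Function.iterate_succ_apply',
          Function.iterate_succ_apply' (⇑(MvPolynomial.pderiv (R := R) (0 : Fin (n+1)))) m
            (e.symm g), ih g, hstar, h1, Derivation.map_smul, map_smul, smul_smul, ← pow_succ']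
  have hfac : ∀ ℓ : ℕ, ℓ < p → ∀ g, ℓ.factorial • hd.D ℓ g = (jacobianDerivF f)^[ℓ] g := by
    intro ℓ _ g
    rw [hD, hiterate ℓ g, smul_comm, ← map_nsmul, mvHasse_factorial]
  have hesymm_s : e.symm s = MvPolynomial.X 0 := by
    apply e.injective
    rw [AlgEquiv.apply_symm_apply, he, MvPolynomial.aeval_X]
    rw [hu, Fin.cons_zero]
  have hD1s : hd.D 1 s = MvPolynomial.C r := by
    rw [hD, pow_one, hesymm_s, mvHasse_one, MvPolynomial.pderiv_X_self, map_one,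
      MvPolynomial.smul_eq_C_mul, mul_one]
  have hCrUnit : IsUnit (MvPolynomial.C (σ := Fin (n+1)) r) :=
    hr.map (MvPolynomial.C : R →+* MvPolynomial (Fin (n+1)) R)
  refine ⟨hd, hlf, hit, ⟨hAIf, ?_, hD1, hfac⟩, hker, s, 1, le_refl 1, ?_, ?_, ?_, ?_⟩
  · intro i
    rw [hker, SetLike.mem_coe]
    exact Algebra.subset_adjoin ⟨i, rfl⟩
  · rw [hD1s]
    exact hCrUnit.ne_zero
  · intro ℓ hℓ
    rw [hD, mvHasse_apply, hesymm_s, MvPolynomial.finSuccEquiv_X_zero,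
      Polynomial.hasseDeriv_X _ hℓ, map_zero, map_zero, smul_zero]
  · rw [hD1s]
    exact hCrUnit
  · intro b hb
    rw [HigherDerivation.kerSet, Set.mem_setOf_eq] at hb
    push_neg at hb
    obtain ⟨m, hm1, hmne⟩ := hb
    exact ⟨m, hm1, hmne⟩
end

section
/- Let R be an integral domain of characteristic p > 0, let B = R[x_1,…,x_n] be the polynomial ring in n variables over R, and let F = (f_1,…,f_{n-1}) ∈ B^{n-1}. If there exists a locally finite iterative higher R-derivation (lfihd) D on B of Jacobian type determined by F such that B^D = R[f_1,…,f_{n-1}] and D has a slice, then F is extendable. -/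
open MvPolynomial

lemma nt_one {p : ℕ} (hp : p.Prime) :
    ∀ (e a r : ℕ), r < p ^ e → (a * p ^ e + r).choose r ≡ 1 [MOD p] := by
  haveI : Fact p.Prime := ⟨hp⟩
  intro e
  induction e with
  | zero =>
    intro a r hr
    have : r = 0 := by simpa using hr
    simp [this, Nat.ModEq.refl]
  | succ e ih =>
    intro a r hr
    have hp0 : 0 < p := hp.pos
    have key := Choose.choose_modEq_choose_mod_mul_choose_div_nat
      (p := p) (n := a * p ^ (e+1) + r) (k := r)
    have h1 : (a * p ^ (e+1) + r) % p = r % p := by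
      have : a * p ^ (e+1) + r = p * (a * p ^ e) + r := by ring
      rw [this, Nat.mul_add_mod]
    have h2 : (a * p ^ (e+1) + r) / p = a * p ^ e + r / p := by
      have : a * p ^ (e+1) + r = p * (a * p ^ e) + r := by ring
      rw [this, Nat.mul_add_div hp0]
    rw [h1, h2, Nat.choose_self] at key
    have hr' : r / p < p ^ e := by
      rw [Nat.div_lt_iff_lt_mul hp0]
      calc r < p ^ (e+1) := hr
        _ = p ^ e * p := by ring
    calc (a * p ^ (e+1) + r).choose r ≡ 1 * (a * p ^ e + r / p).choose (r / p) [MOD p] := key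
      _ ≡ 1 * 1 [MOD p] := Nat.ModEq.mul_left 1 (ih a (r / p) hr')
      _ = 1 := by ring

lemma nt_two {p : ℕ} (hp : p.Prime) :
    ∀ (e q : ℕ), (q * p ^ e).choose (p ^ e) ≡ q [MOD p] := by
  haveI : Fact p.Prime := ⟨hp⟩
  intro e
  induction e with
  | zero => intro q; simp [Nat.choose_one_right, Nat.ModEq.refl]
  | succ e ih =>
    intro q
    have hp0 : 0 < p := hp.pos
    have key := Choose.choose_modEq_choose_mod_mul_choose_div_nat
      (p := p) (n := q * p ^ (e+1)) (k := p ^ (e+1))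
    have h1 : (q * p ^ (e+1)) % p = 0 := by
      have : q * p ^ (e+1) = p * (q * p ^ e) := by ring
      simp [this]
    have h2 : (q * p ^ (e+1)) / p = q * p ^ e := by
      have : q * p ^ (e+1) = p * (q * p ^ e) := by ring
      rw [this, Nat.mul_div_cancel_left _ hp0]
    have h3 : (p ^ (e+1)) % p = 0 := by
      have : p ^ (e+1) = p * p ^ e := by ring
      simp [this]
    have h4 : (p ^ (e+1)) / p = p ^ e := by
      have : p ^ (e+1) = p * p ^ e := by ring
      rw [this, Nat.mul_div_cancel_left _ hp0]
    rw [h1, h2, h3, h4, Nat.choose_self] at key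
    calc (q * p ^ (e+1)).choose (p ^ (e+1)) ≡ 1 * (q * p ^ e).choose (p ^ e) [MOD p] := key
      _ ≡ 1 * q [MOD p] := Nat.ModEq.mul_left 1 (ih q)
      _ = q := by ring

lemma nt_pow {p N : ℕ} (hp : p.Prime) (hN : 1 ≤ N)
    (H : ∀ i, 0 < i → i < N → p ∣ N.choose i) : ∃ e, N = p ^ e := by
  obtain ⟨e, q, hpq, hNq⟩ : ∃ e q, ¬ p ∣ q ∧ N = p ^ e * q :=
    ⟨N.factorization p, N / p ^ N.factorization p,
      Nat.not_dvd_ordCompl hp (by omega),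
      (Nat.ordProj_mul_ordCompl_eq_self N p).symm⟩
  have hpe : 0 < p ^ e := pow_pos hp.pos e
  have hq0 : q ≠ 0 := by rintro rfl; simp at hNq; omega
  by_cases hq1 : q = 1
  · exact ⟨e, by rw [hNq, hq1, mul_one]⟩
  · exfalso
    have hq2 : 2 ≤ q := by omega
    have hlt : p ^ e < N := by rw [hNq]; nlinarith
    have hdvd := H (p ^ e) hpe hlt
    have hmod := nt_two hp e q
    rw [show q * p ^ e = N from by rw [hNq]; ring] at hmod
    have : q ≡ 0 [MOD p] := hmod.symm.trans ((Nat.modEq_zero_iff_dvd).2 hdvd)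
    exact hpq ((Nat.modEq_zero_iff_dvd).1 this)

lemma nt_main {p N m : ℕ} (hp : p.Prime) (hN : 1 ≤ N)
    (H : ∀ i, 0 < i → i < N → p ∣ N.choose i) (hm : ¬ N ∣ m) :
    ¬ p ∣ m.choose (N * (m / N)) := by
  obtain ⟨e, rfl⟩ := nt_pow hp hN H
  have hpe : 0 < p ^ e := pow_pos hp.pos e
  have hm' : p ^ e * (m / p ^ e) + m % p ^ e = m := Nat.div_add_mod m (p ^ e)
  have hr0 : 0 < m % p ^ e := Nat.pos_of_ne_zero fun h => hm (Nat.dvd_of_mod_eq_zero h)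
  have hrN : m % p ^ e < p ^ e := Nat.mod_lt _ hpe
  have hsymm : m.choose (p ^ e * (m / p ^ e)) = m.choose (m % p ^ e) := by
    have h : m - m % p ^ e = p ^ e * (m / p ^ e) := by omega
    rw [← h]; exact Nat.choose_symm (Nat.mod_le m _)
  rw [hsymm]
  have hmod := nt_one hp e (m / p ^ e) (m % p ^ e) hrN
  rw [show m / p ^ e * p ^ e + m % p ^ e = m from by
    rw [Nat.mul_comm]; exact hm'] at hmod
  intro hdvd
  have h1 : (0 : ℕ) ≡ 1 [MOD p] := ((Nat.modEq_zero_iff_dvd).2 hdvd).symm.trans hmod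
  have h2 : 0 % p = 1 % p := h1
  rw [Nat.zero_mod, Nat.one_mod_eq_one.mpr (by have := hp.two_le; omega)] at h2
  omega

namespace HDAux

variable {R B : Type*} [CommRing R] [CommRing B] [Algebra R B]

lemma D_zero_apply (hd : HigherDerivation R B) (b : B) : hd.D 0 b = b := by
  rw [hd.D_zero]; rfl

lemma D_one_eq_zero (hd : HigherDerivation R B) :
    ∀ ℓ : ℕ, 1 ≤ ℓ → hd.D ℓ (1 : B) = 0 := by
  intro ℓ
  induction ℓ using Nat.strong_induction_on with
  | _ ℓ ih =>
    intro hℓ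
    have h := hd.leibniz ℓ 1 1
    rw [one_mul] at h
    have hsum : ∑ ij ∈ Finset.HasAntidiagonal.antidiagonal ℓ, hd.D ij.1 (1:B) * hd.D ij.2 (1:B)
        = hd.D 0 (1:B) * hd.D ℓ (1:B) + hd.D ℓ (1:B) * hd.D 0 (1:B) := by
      rw [Finset.sum_eq_add_of_mem (0, ℓ) (ℓ, 0)
        (by simp) (by simp) (by intro hcon; simp at hcon; omega) ?_]
      rintro ⟨i, j⟩ hij hne
      obtain ⟨hne1, hne2⟩ := hne
      simp only [Finset.HasAntidiagonal.mem_antidiagonal] at hij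
      have hi1 : 1 ≤ i := by
        rcases Nat.eq_zero_or_pos i with h0 | h0
        · exfalso; apply hne1; subst h0
          simp only [Prod.mk.injEq]; exact ⟨trivial, by omega⟩
        · exact h0
      have hiℓ : i < ℓ := by
        rcases Nat.lt_or_ge i ℓ with h0 | h0
        · exact h0
        · exfalso; apply hne2
          simp only [Prod.mk.injEq]; omega
      rw [ih i hiℓ hi1, zero_mul]
    rw [hsum, D_zero_apply, one_mul, mul_one] at h
    nth_rewrite 1 [← add_zero (hd.D ℓ (1:B))] at h
    exact (add_left_cancel h).symm

lemma ker_mul (hd : HigherDerivation R B) {c : B} (hc : c ∈ hd.kerSet) (x : B) (ℓ : ℕ) :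
    hd.D ℓ (c * x) = c * hd.D ℓ x := by
  rw [hd.leibniz]
  rw [Finset.sum_eq_single_of_mem (0, ℓ) (by simp)]
  · rw [D_zero_apply]
  · rintro ⟨i, j⟩ hij hne
    simp only [Finset.HasAntidiagonal.mem_antidiagonal] at hij
    have hi1 : 1 ≤ i := by
      rcases Nat.eq_zero_or_pos i with h0 | h0
      · exfalso; apply hne; subst h0
        simp only [Prod.mk.injEq]; exact ⟨trivial, by omega⟩
      · exact h0
    rw [hc i hi1, zero_mul]

lemma ker_mul_mem (hd : HigherDerivation R B) {c c' : B} (hc : c ∈ hd.kerSet)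
    (hc' : c' ∈ hd.kerSet) : c * c' ∈ hd.kerSet := by
  intro ℓ hℓ
  rw [ker_mul hd hc, hc' ℓ hℓ, mul_zero]

lemma one_mem_ker (hd : HigherDerivation R B) : (1 : B) ∈ hd.kerSet :=
  fun ℓ hℓ => D_one_eq_zero hd ℓ hℓ

lemma ker_of_top (hd : HigherDerivation R B) (hIt : hd.Iterative) {b : B} {m : ℕ}
    (hb : ∀ ℓ, m < ℓ → hd.D ℓ b = 0) : hd.D m b ∈ hd.kerSet := by
  intro i hi
  rw [hIt i m b, hb (i + m) (by omega), smul_zero]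

lemma inv_mem_ker [NoZeroDivisors B] (hd : HigherDerivation R B) {u v : B}
    (hu : u ∈ hd.kerSet) (huv : u * v = 1) (hu0 : u ≠ 0) : v ∈ hd.kerSet := by
  intro ℓ hℓ
  have h := ker_mul hd hu v ℓ
  rw [huv, D_one_eq_zero hd ℓ hℓ] at h
  rcases mul_eq_zero.1 h.symm with h0 | h0
  · exact absurd h0 hu0
  · exact h0

lemma spow_top (hd : HigherDerivation R B) {s : B} {N : ℕ}
    (hs : ∀ ℓ, N < ℓ → hd.D ℓ s = 0) :
    ∀ k ℓ, k * N < ℓ → hd.D ℓ (s ^ k) = 0 := by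
  intro k
  induction k with
  | zero =>
    intro ℓ hℓ
    rw [pow_zero]
    exact D_one_eq_zero hd ℓ (by omega)
  | succ k ih =>
    intro ℓ hℓ
    rw [pow_succ, hd.leibniz]
    apply Finset.sum_eq_zero
    rintro ⟨i, j⟩ hij
    simp only [Finset.HasAntidiagonal.mem_antidiagonal] at hij
    rcases Nat.lt_or_ge (k * N) i with h0 | h0
    · rw [ih i h0, zero_mul]
    · have : N < j := by
        have : (k + 1) * N = k * N + N := by ring
        omega
      rw [hs j this, mul_zero]

lemma spow_lead (hd : HigherDerivation R B) {s : B} {N : ℕ}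
    (hs : ∀ ℓ, N < ℓ → hd.D ℓ s = 0) :
    ∀ k, hd.D (k * N) (s ^ k) = (hd.D N s) ^ k := by
  intro k
  induction k with
  | zero => rw [pow_zero, pow_zero, Nat.zero_mul, D_zero_apply]
  | succ k ih =>
    rw [pow_succ, hd.leibniz]
    rw [Finset.sum_eq_single_of_mem (k * N, N)
      (by simp [Finset.HasAntidiagonal.mem_antidiagonal]; ring)]
    · rw [ih, pow_succ]
    · rintro ⟨i, j⟩ hij hne
      simp only [Finset.HasAntidiagonal.mem_antidiagonal] at hij
      rcases Nat.lt_or_ge (k * N) i with h0 | h0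
      · rw [spow_top hd hs k i h0, zero_mul]
      · rcases Nat.eq_or_lt_of_le h0 with h1 | h1
        · exfalso; apply hne
          have : j = N := by
            have : (k + 1) * N = k * N + N := by ring
            omega
          rw [← h1, this]
        · have : N < j := by
            have : (k + 1) * N = k * N + N := by ring
            omega
          rw [hs j this, mul_zero]

end HDAux

universe u

/-- Theorem 2.8, (ii) ⟹ (i). Let `R` be an integral domain of
characteristic `p > 0`, `B = R[x_0, …, x_n]`, and `F = (f 0, …, f (n-1)) ∈ Bⁿ`.
If there exists a locally finite iterative higher `R`-derivation `D` on `B` of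
Jacobian type determined by `F` with `B^D = R[f 0, …, f (n-1)]` that has a slice,
then `F` is extendable. -/
theorem stmt10 {R : Type u} [CommRing R] [IsDomain R] (p : ℕ) (hp : 0 < p) [CharP R p]
    {n : ℕ} (f : Fin n → MvPolynomial (Fin (n + 1)) R)
    (h : ∃ hd : HigherDerivation R (MvPolynomial (Fin (n + 1)) R),
      hd.LocallyFinite ∧ hd.Iterative ∧ IsJacobianTypeF p hd f ∧
      hd.kerSet = ↑(Algebra.adjoin R (Set.range f)) ∧
      ∃ s : MvPolynomial (Fin (n + 1)) R, hd.IsSlice s) :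
    Extendable f := by
  
  classical
  obtain ⟨hd, hLF, hIt, hJac, hker, s, hslice⟩ := h
  obtain ⟨N, hN1, hDNs, htop, hunit, hmin⟩ := hslice
  have hp' : p.Prime := (CharP.char_is_prime_or_zero R p).resolve_right (by omega)
  have hinj : Function.Injective (algebraMap R (MvPolynomial (Fin (n+1)) R)) := by
    rw [MvPolynomial.algebraMap_eq]
    exact MvPolynomial.C_injective _ _
  haveI : CharP (MvPolynomial (Fin (n+1)) R) p := charP_of_injective_algebraMap hinj p
  obtain ⟨U, hU⟩ := hunit
  set u := hd.D N s with hu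
  set v := ((U⁻¹ : (MvPolynomial (Fin (n+1)) R)ˣ) : MvPolynomial (Fin (n+1)) R) with hv
  have huv : u * v = 1 := by rw [← hU]; exact U.mul_inv
  have hvu : v * u = 1 := by rw [← hU]; exact U.inv_mul
  have hu_ker : u ∈ hd.kerSet := HDAux.ker_of_top hd hIt htop
  have hv_ker : v ∈ hd.kerSet := HDAux.inv_mem_ker hd hu_ker huv hDNs
  have hvk : ∀ j : ℕ, v ^ j ∈ hd.kerSet := by
    intro j
    induction j with
    | zero => rw [pow_zero]; exact HDAux.one_mem_ker hd
    | succ j ihj => rw [pow_succ]; exact HDAux.ker_mul_mem hd ihj hv_ker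
  -- the binomial coefficients C(N, i) all vanish mod p
  have H : ∀ i, 0 < i → i < N → p ∣ N.choose i := by
    intro i hi0 hiN
    by_contra hnd
    have hcne : ((N.choose i : ℕ) : MvPolynomial (Fin (n+1)) R) ≠ 0 := by
      rw [Ne, CharP.cast_eq_zero_iff _ p]; exact hnd
    have hc : hd.D (N - i) (hd.D i s) = N.choose i • hd.D N s := by
      have h2 := hIt (N - i) i s
      rwa [Nat.sub_add_cancel (le_of_lt hiN)] at h2
    have hne : hd.D (N - i) (hd.D i s) ≠ 0 := by
      rw [hc, nsmul_eq_mul]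
      exact mul_ne_zero hcne hDNs
    have hnot : hd.D i s ∉ hd.kerSet := fun hmem => hne (hmem (N - i) (by omega))
    obtain ⟨m', hm'N, hm'⟩ := hmin _ hnot
    apply hm'
    rw [hIt m' i s, htop (m' + i) (by omega), smul_zero]
  -- N divides the top degree of every element
  have Ndvd : ∀ (b : MvPolynomial (Fin (n+1)) R) (m : ℕ), 1 ≤ m → hd.D m b ≠ 0 →
      (∀ ℓ, m < ℓ → hd.D ℓ b = 0) → N ∣ m := by
    intro b m hm1 hbm hbtop
    by_contra hnd
    have hchoose := nt_main hp' hN1 H hnd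
    have hkr : N * (m / N) + m % N = m := Nat.div_add_mod m N
    have hr0 : 0 < m % N := Nat.pos_of_ne_zero fun h0 => hnd (Nat.dvd_of_mod_eq_zero h0)
    have hrN : m % N < N := Nat.mod_lt _ (by omega)
    have hcne : ((m.choose (N * (m / N)) : ℕ) : MvPolynomial (Fin (n+1)) R) ≠ 0 := by
      rw [Ne, CharP.cast_eq_zero_iff _ p]; exact hchoose
    have hc : hd.D (m % N) (hd.D (N * (m / N)) b) = m.choose (N * (m / N)) • hd.D m b := by
      have h2 := hIt (m % N) (N * (m / N)) b
      rwa [show m % N + N * (m / N) = m from by omega] at h2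
    have hne : hd.D (m % N) (hd.D (N * (m / N)) b) ≠ 0 := by
      rw [hc, nsmul_eq_mul]
      exact mul_ne_zero hcne hbm
    have hnot : hd.D (N * (m / N)) b ∉ hd.kerSet :=
      fun hmem => hne (hmem (m % N) (by omega))
    obtain ⟨m', hm'N, hm'⟩ := hmin _ hnot
    apply hm'
    rw [hIt m' (N * (m / N)) b, hbtop (m' + N * (m / N)) (by omega), smul_zero]
  set T := Algebra.adjoin R (Set.range (Fin.snoc f s : Fin (n+1) → MvPolynomial (Fin (n+1)) R))
    with hT
  have hfT : ∀ i, f i ∈ T := fun i =>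
    Algebra.subset_adjoin ⟨Fin.castSucc i, by simp⟩
  have hsT : s ∈ T := Algebra.subset_adjoin ⟨Fin.last n, by simp⟩
  have hkerT : ∀ b ∈ hd.kerSet, b ∈ T := by
    intro b hb
    rw [hker] at hb
    refine Algebra.adjoin_mono ?_ hb
    rintro _ ⟨i, rfl⟩
    exact ⟨Fin.castSucc i, by simp⟩
  -- generation by strong induction on the degree bound
  have key : ∀ M : ℕ, ∀ b : MvPolynomial (Fin (n+1)) R,
      (∀ ℓ, M ≤ ℓ → hd.D ℓ b = 0) → b ∈ T := by
    intro M
    induction M using Nat.strong_induction_on with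
    | _ M ih =>
      cases M with
      | zero =>
        intro b hb
        have : b = 0 := by
          have h0 := hb 0 le_rfl
          rwa [HDAux.D_zero_apply] at h0
        rw [this]
        exact T.zero_mem
      | succ M =>
        intro b hb
        by_cases hbker : b ∈ hd.kerSet
        · exact hkerT b hbker
        · by_cases hDM : hd.D M b = 0
          · refine ih M (by omega) b ?_
            intro ℓ hℓ
            rcases Nat.eq_or_lt_of_le hℓ with heq | hlt
            · rw [← heq]; exact hDM
            · exact hb ℓ (by omega)
          · have hM1 : 1 ≤ M := by
              by_contra h0
              push_neg at h0
              apply hbker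
              intro ℓ hℓ
              exact hb ℓ (by omega)
            have hbtop : ∀ ℓ, M < ℓ → hd.D ℓ b = 0 := fun ℓ hℓ => hb ℓ (by omega)
            obtain ⟨k, hk⟩ := Ndvd b M hM1 hDM hbtop
            have hk2 : M = k * N := hk.trans (Nat.mul_comm N k)
            have ha_ker : hd.D M b ∈ hd.kerSet := HDAux.ker_of_top hd hIt hbtop
            have havk_ker : hd.D M b * v ^ k ∈ hd.kerSet :=
              HDAux.ker_mul_mem hd ha_ker (hvk k)
            have hb'bound : ∀ ℓ, M ≤ ℓ → hd.D ℓ (b - hd.D M b * v ^ k * s ^ k) = 0 := by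
              intro ℓ hℓ
              rw [map_sub, HDAux.ker_mul hd havk_ker (s ^ k) ℓ]
              rcases Nat.eq_or_lt_of_le hℓ with heq | hlt
              · rw [← heq, hk2, HDAux.spow_lead hd htop k,
                  mul_assoc, ← mul_pow, hvu, one_pow, mul_one, sub_self]
              · rw [hbtop ℓ hlt, HDAux.spow_top hd htop k ℓ (by omega), mul_zero, sub_zero]
            have hb'T : b - hd.D M b * v ^ k * s ^ k ∈ T := ih M (by omega) _ hb'bound
            have hbeq : b = (b - hd.D M b * v ^ k * s ^ k) + hd.D M b * v ^ k * s ^ k := by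
              ring
            rw [hbeq]
            exact T.add_mem hb'T
              (T.mul_mem (T.mul_mem (hkerT _ ha_ker) (hkerT _ (hvk k))) (T.pow_mem hsT k))
  have htopT : T = ⊤ := by
    rw [eq_top_iff]
    intro b _
    obtain ⟨Nb, hNb⟩ := hLF b
    exact key Nb b hNb
  -- transcendence of s over the kernel
  have htr : Transcendental (Algebra.adjoin R (Set.range f)) s := by
    intro halg
    obtain ⟨P, hP0, hPs⟩ := halg
    set K := P.natDegree with hK
    have hcoeff : ∀ j : ℕ,
        ((P.coeff j : MvPolynomial (Fin (n+1)) R)) ∈ hd.kerSet := by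
      intro j
      rw [hker]
      exact (P.coeff j).2
    have hsum : Polynomial.aeval s P
        = ∑ j ∈ Finset.range (K+1), (P.coeff j : MvPolynomial (Fin (n+1)) R) * s ^ j := by
      rw [Polynomial.aeval_eq_sum_range]
      refine Finset.sum_congr rfl fun j _ => ?_
      rw [Algebra.smul_def]
      rfl
    have h0 : (0 : MvPolynomial (Fin (n+1)) R)
        = ∑ j ∈ Finset.range (K+1),
            (P.coeff j : MvPolynomial (Fin (n+1)) R) * hd.D (K * N) (s ^ j) := by
      calc (0 : MvPolynomial (Fin (n+1)) R)
          = hd.D (K * N) (Polynomial.aeval s P) := by rw [hPs, map_zero]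
        _ = ∑ j ∈ Finset.range (K+1), hd.D (K * N)
              ((P.coeff j : MvPolynomial (Fin (n+1)) R) * s ^ j) := by
            rw [hsum, map_sum]
        _ = _ := Finset.sum_congr rfl fun j _ => HDAux.ker_mul hd (hcoeff j) _ _
    rw [Finset.sum_eq_single_of_mem K (Finset.self_mem_range_succ K) ?_] at h0
    · rw [HDAux.spow_lead hd htop K] at h0
      have hcK : (P.coeff K : MvPolynomial (Fin (n+1)) R) = 0 := by
        rcases mul_eq_zero.1 h0.symm with h1 | h1
        · exact h1
        · exact absurd h1 (pow_ne_zero _ hDNs)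
      have hcK' : P.coeff K = 0 := by
        exact_mod_cast hcK
      exact hP0 (Polynomial.leadingCoeff_eq_zero.1 hcK')
    · intro j hj hne
      have hjK : j < K := by
        rw [Finset.mem_range] at hj
        omega
      rw [HDAux.spow_top hd htop j (K * N)
        (Nat.mul_lt_mul_of_lt_of_le hjK (le_refl N) (by omega)), mul_zero]
  have hfAI : AlgebraicIndependent R f := hJac.1
  have hAI : AlgebraicIndependent R
      (Fin.snoc f s : Fin (n+1) → MvPolynomial (Fin (n+1)) R) := by
    have h1 := (hfAI.option_iff_transcendental s).2 htr
    have h2 := h1.comp finSuccEquivLast finSuccEquivLast.injective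
    have heq : ((fun o : Option (Fin n) => o.elim s f) ∘ finSuccEquivLast)
        = (Fin.snoc f s : Fin (n+1) → MvPolynomial (Fin (n+1)) R) := by
      funext i
      refine Fin.lastCases ?_ ?_ i
      · simp [finSuccEquivLast_last, Fin.snoc_last]
      · intro j
        simp [finSuccEquivLast_castSucc, Fin.snoc_castSucc]
    rwa [heq] at h2
  exact ⟨s, hAI, htopT⟩
end

section
/- Let k be a field of characteristic p > 0 and let f ∈ k[x,y]. If f is a variable of k[x,y], then there exists a locally finite iterative higher k-derivation (lfihd) D on k[x,y] which is of Jacobian type determined by f, satisfies k[x,y]^D = k[f], and has a slice. -/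
open MvPolynomial

namespace Stmt11

variable {k : Type*} [CommRing k]

/-- Substitution `x ↦ x`, `y ↦ y + t`. -/
noncomputable def Phi : MvPolynomial (Fin 2) k →ₐ[k] Polynomial (MvPolynomial (Fin 2) k) :=
  MvPolynomial.aeval
    ![Polynomial.C (MvPolynomial.X 0), Polynomial.C (MvPolynomial.X 1) + Polynomial.X]

lemma Phi_X0 : Phi (X 0 : MvPolynomial (Fin 2) k) = Polynomial.C (X 0) := by simp [Phi]

lemma Phi_X1 : Phi (X 1 : MvPolynomial (Fin 2) k) = Polynomial.C (X 1) + Polynomial.X := by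
  simp [Phi]

lemma Phi_C (a : k) : Phi (C a : MvPolynomial (Fin 2) k) = Polynomial.C (MvPolynomial.C a) := by
  simp [Phi, MvPolynomial.aeval_C, Polynomial.algebraMap_apply, MvPolynomial.algebraMap_eq]

lemma coeff_zero_Phi (q : MvPolynomial (Fin 2) k) : (Phi q).coeff 0 = q := by
  induction q using MvPolynomial.induction_on with
  | C a => simp [Phi_C]
  | add p q hp hq => simp [hp, hq]
  | mul_X p i hp =>
    rw [map_mul, Polynomial.mul_coeff_zero, hp]
    fin_cases i <;> simp [Phi_X0, Phi_X1]

lemma coeff_one_mul {A : Type*} [CommRing A] (p q : Polynomial A) :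
    (p * q).coeff 1 = p.coeff 0 * q.coeff 1 + p.coeff 1 * q.coeff 0 := by
  rw [Polynomial.coeff_mul]
  have h : Finset.HasAntidiagonal.antidiagonal 1 = {((0 : ℕ), (1 : ℕ)), (1, 0)} := rfl
  rw [h]
  simp

lemma coeff_one_Phi (q : MvPolynomial (Fin 2) k) : (Phi q).coeff 1 = pderiv 1 q := by
  induction q using MvPolynomial.induction_on with
  | C a => simp [Phi_C, pderiv_C]
  | add p q hp hq => simp [hp, hq]
  | mul_X p i hp =>
    rw [map_mul, coeff_one_mul, hp, coeff_zero_Phi, pderiv_mul]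
    fin_cases i <;>
      simp [Phi_X0, Phi_X1, pderiv_X_self, coeff_zero_Phi, pderiv_X] <;> ring


lemma coeff_coeff_aeval {A : Type*} [CommRing A] (p : Polynomial A) (i j : ℕ) :
    ((Polynomial.aeval
        ((Polynomial.X : Polynomial (Polynomial A)) + Polynomial.C Polynomial.X) p).coeff j).coeff i
      = (i + j).choose j • p.coeff (i + j) := by
  induction p using Polynomial.induction_on' with
  | add p q hp hq => simp [hp, hq]
  | monomial n b =>
    rw [Polynomial.aeval_monomial]
    have halg : algebraMap A (Polynomial (Polynomial A)) b
        = Polynomial.C (Polynomial.C b) := rfl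
    rw [halg, Polynomial.coeff_C_mul, Polynomial.coeff_X_add_C_pow, Polynomial.coeff_C_mul,
      ← Polynomial.C_eq_natCast, Polynomial.coeff_mul_C, Polynomial.coeff_X_pow,
      Polynomial.coeff_monomial]
    by_cases h : n = i + j
    · subst h
      rw [if_pos rfl, if_pos (by omega : i = i + j - j), nsmul_eq_mul]
      ring
    · rw [if_neg h, smul_zero]
      by_cases h2 : i = n - j
      · have hnj : n < j := by
          by_contra hc
          exact h (by omega)
        simp [h2, Nat.choose_eq_zero_of_lt hnj]
      · simp [h2]


lemma map_Phi_Phi (q : MvPolynomial (Fin 2) k) :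
    Polynomial.map (Phi (k := k) : _ →ₐ[k] _).toRingHom (Phi q)
      = Polynomial.aeval
          ((Polynomial.X : Polynomial (Polynomial (MvPolynomial (Fin 2) k)))
            + Polynomial.C Polynomial.X) (Phi q) := by
  have h : (Polynomial.mapAlgHom (Phi (k := k))).comp Phi
      = ((Polynomial.aeval
          ((Polynomial.X : Polynomial (Polynomial (MvPolynomial (Fin 2) k)))
            + Polynomial.C Polynomial.X)).restrictScalars k).comp Phi := by
    apply MvPolynomial.algHom_ext
    intro i
    fin_cases i <;> simp [Phi_X0, Phi_X1, Polynomial.coe_mapAlgHom] <;> ring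
  have := DFunLike.congr_fun h q
  simpa [Polynomial.coe_mapAlgHom] using this

/-- Iterativity of the Hasse-type family `q ↦ (Phi q).coeff ℓ`. -/
lemma hasse_comp (q : MvPolynomial (Fin 2) k) (i j : ℕ) :
    (Phi ((Phi q).coeff j)).coeff i = (i + j).choose j • (Phi q).coeff (i + j) := by
  have h := congrArg (fun p : Polynomial (Polynomial (MvPolynomial (Fin 2) k)) =>
      (p.coeff j).coeff i) (map_Phi_Phi q)
  rw [Polynomial.coeff_map, coeff_coeff_aeval] at h
  simpa using h

lemma chain_rule (F : Fin 2 → MvPolynomial (Fin 2) k) (m : Fin 2)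
    (q : MvPolynomial (Fin 2) k) :
    pderiv m (aeval F q)
      = aeval F (pderiv 0 q) * pderiv m (F 0) + aeval F (pderiv 1 q) * pderiv m (F 1) := by
  induction q using MvPolynomial.induction_on with
  | C a => simp
  | add p q hp hq => simp only [map_add, hp, hq]; ring
  | mul_X p i hp =>
    simp only [map_mul, map_add, aeval_X, pderiv_mul, hp]
    fin_cases i <;> simp [pderiv_X] <;> ring

/-- A unit of `k[x,y]` over a domain is a nonzero constant. -/
lemma isUnit_eq_C {k : Type*} [CommRing k] [IsDomain k] {u : MvPolynomial (Fin 2) k}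
    (hu : IsUnit u) : ∃ c : k, IsUnit c ∧ MvPolynomial.C c = u := by
  have h2 := hu.map (MvPolynomial.finSuccEquiv k 1)
  obtain ⟨r, hr, hru⟩ := Polynomial.isUnit_iff.mp h2
  have h1 := hr.map (MvPolynomial.finSuccEquiv k 0)
  obtain ⟨s, hs, hsr⟩ := Polynomial.isUnit_iff.mp h1
  obtain ⟨c, rfl⟩ := MvPolynomial.C_surjective (Fin 0) s
  have e0 := RingHom.congr_fun (MvPolynomial.finSuccEquiv_comp_C_eq_C (R := k) 0) c
  have e1 := RingHom.congr_fun (MvPolynomial.finSuccEquiv_comp_C_eq_C (R := k) 1) c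
  simp only [RingHom.comp_apply, RingHom.coe_coe] at e0 e1
  have hcr : (MvPolynomial.C c : MvPolynomial (Fin 1) k) = r := by
    have h := congrArg (MvPolynomial.finSuccEquiv k 0).symm hsr
    rw [AlgEquiv.symm_apply_apply] at h
    rw [← h, e0]
  refine ⟨c, ?_, ?_⟩
  · have := hs.map (MvPolynomial.constantCoeff (R := k) (σ := Fin 0))
    simpa using this
  · have h := congrArg (MvPolynomial.finSuccEquiv k 1).symm hru
    rw [AlgEquiv.symm_apply_apply] at h
    rw [← h, ← hcr, e1]


/-- Scaling `t ↦ c t`. -/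
noncomputable def scaleHom (c : k) :
    Polynomial (MvPolynomial (Fin 2) k) →ₐ[k] Polynomial (MvPolynomial (Fin 2) k) :=
  (Polynomial.aeval (Polynomial.C (MvPolynomial.C c) * Polynomial.X)).restrictScalars k

lemma coeff_scaleHom (c : k) (p : Polynomial (MvPolynomial (Fin 2) k)) (ℓ : ℕ) :
    (scaleHom c p).coeff ℓ = (MvPolynomial.C c) ^ ℓ * p.coeff ℓ := by
  induction p using Polynomial.induction_on' with
  | add p q hp hq => simp [hp, hq, mul_add]
  | monomial n b =>
    simp only [scaleHom, AlgHom.coe_restrictScalars', Polynomial.aeval_monomial, mul_pow,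
      ← Polynomial.C_pow]
    rw [show (algebraMap (MvPolynomial (Fin 2) k) (Polynomial (MvPolynomial (Fin 2) k))) b
      = Polynomial.C b from rfl]
    rw [Polynomial.coeff_C_mul, Polynomial.coeff_C_mul, Polynomial.coeff_X_pow,
      Polynomial.coeff_monomial]
    by_cases h : ℓ = n
    · subst h; simp; ring
    · simp [h, Ne.symm h]

variable (e : MvPolynomial (Fin 2) k ≃ₐ[k] MvPolynomial (Fin 2) k) (c : k)

noncomputable def theta : MvPolynomial (Fin 2) k →ₐ[k] Polynomial (MvPolynomial (Fin 2) k) :=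
  (Polynomial.mapAlgHom e.toAlgHom).comp ((scaleHom c).comp (Phi.comp e.symm.toAlgHom))

lemma coeff_theta (b : MvPolynomial (Fin 2) k) (ℓ : ℕ) :
    (theta e c b).coeff ℓ = e ((MvPolynomial.C c) ^ ℓ * (Phi (e.symm b)).coeff ℓ) := by
  simp only [theta, AlgHom.comp_apply, Polynomial.coe_mapAlgHom, AlgEquiv.toAlgHom_eq_coe,
    AlgHom.coe_coe]
  rw [Polynomial.coeff_map, coeff_scaleHom]
  rfl

noncomputable def hdOf : HigherDerivation k (MvPolynomial (Fin 2) k) where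
  D ℓ :=
    { toFun := fun b => (theta e c b).coeff ℓ
      map_add' := by intro a b; simp
      map_smul' := by intro r b; simp [Polynomial.coeff_smul] }
  D_zero := by
    apply LinearMap.ext
    intro b
    show (theta e c b).coeff 0 = b
    rw [coeff_theta, pow_zero, one_mul, coeff_zero_Phi, AlgEquiv.apply_symm_apply]
  leibniz := by
    intro ℓ a b
    show (theta e c (a * b)).coeff ℓ = _
    rw [map_mul, Polynomial.coeff_mul]
    rfl

lemma hdOf_D (ℓ : ℕ) (b : MvPolynomial (Fin 2) k) :
    (hdOf e c).D ℓ b = e ((MvPolynomial.C c) ^ ℓ * (Phi (e.symm b)).coeff ℓ) :=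
  coeff_theta e c b ℓ

lemma hdOf_locallyFinite : (hdOf e c).LocallyFinite := by
  intro b
  refine ⟨(theta e c b).natDegree + 1, fun ℓ hℓ => ?_⟩
  show (theta e c b).coeff ℓ = 0
  exact Polynomial.coeff_eq_zero_of_natDegree_lt (by omega)

lemma hdOf_iterative : (hdOf e c).Iterative := by
  intro i j b
  have hPhiC : ∀ q : MvPolynomial (Fin 2) k,
      Phi ((MvPolynomial.C c) ^ j * q)
        = Polynomial.C ((MvPolynomial.C c) ^ j) * Phi q := by
    intro q
    rw [map_mul, map_pow, Phi_C, Polynomial.C_pow]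
  rw [hdOf_D, hdOf_D, hdOf_D, AlgEquiv.symm_apply_apply, hPhiC,
    Polynomial.coeff_C_mul, hasse_comp]
  rw [show (MvPolynomial.C c : MvPolynomial (Fin 2) k) ^ i
        * ((MvPolynomial.C c) ^ j * ((i + j).choose j • (Phi (e.symm b)).coeff (i + j)))
      = (i + j).choose j • ((MvPolynomial.C c) ^ (i + j) * (Phi (e.symm b)).coeff (i + j)) by
    rw [pow_add, nsmul_eq_mul, nsmul_eq_mul]; ring]
  rw [map_nsmul]


lemma eval2_Phi (q : MvPolynomial (Fin 2) k) :
    Polynomial.eval₂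
      (MvPolynomial.aeval (R := k) ![MvPolynomial.X 0, (0 : MvPolynomial (Fin 2) k)]).toRingHom
      (MvPolynomial.X 1) (Phi q) = q := by
  induction q using MvPolynomial.induction_on with
  | C a => rw [Phi_C, Polynomial.eval₂_C]; simp
  | add p q hp hq => rw [map_add, Polynomial.eval₂_add, hp, hq]
  | mul_X p i hp =>
    rw [map_mul, Polynomial.eval₂_mul, hp]
    congr 1
    fin_cases i
    · show Polynomial.eval₂ _ _ (Phi (MvPolynomial.X 0)) = MvPolynomial.X 0
      rw [Phi_X0, Polynomial.eval₂_C]; simp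
    · show Polynomial.eval₂ _ _ (Phi (MvPolynomial.X 1)) = MvPolynomial.X 1
      rw [Phi_X1, Polynomial.eval₂_add, Polynomial.eval₂_C, Polynomial.eval₂_X]; simp

lemma aeval_X0_zero_mem (q : MvPolynomial (Fin 2) k) :
    MvPolynomial.aeval (R := k) ![MvPolynomial.X 0, (0 : MvPolynomial (Fin 2) k)] q
      ∈ Algebra.adjoin k {(MvPolynomial.X 0 : MvPolynomial (Fin 2) k)} := by
  induction q using MvPolynomial.induction_on with
  | C a => rw [aeval_C]; exact Subalgebra.algebraMap_mem _ a
  | add p q hp hq => rw [map_add]; exact add_mem hp hq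
  | mul_X p i hp =>
    rw [map_mul]
    refine mul_mem hp ?_
    fin_cases i
    · simpa using Algebra.subset_adjoin (Set.mem_singleton _)
    · simp only [show ((fun i => i) (⟨1, by omega⟩ : Fin 2)) = (1 : Fin 2) from rfl]
      rw [show MvPolynomial.aeval (R := k)
        ![MvPolynomial.X 0, (0 : MvPolynomial (Fin 2) k)] (MvPolynomial.X 1) = 0 by simp]
      exact zero_mem _

lemma Phi_adjoin {q : MvPolynomial (Fin 2) k}
    (hq : q ∈ Algebra.adjoin k {(MvPolynomial.X 0 : MvPolynomial (Fin 2) k)}) :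
    Phi q = Polynomial.C q := by
  induction hq using Algebra.adjoin_induction with
  | mem x hx => rw [Set.mem_singleton_iff] at hx; subst hx; exact Phi_X0
  | algebraMap r => rw [show (algebraMap k (MvPolynomial (Fin 2) k)) r = MvPolynomial.C r from rfl,
      Phi_C]
  | add x y _ _ hx hy => rw [map_add, hx, hy, map_add]
  | mul x y _ _ hx hy => rw [map_mul, hx, hy, map_mul]

end Stmt11


universe u

/-- Theorem 3.1, (i) ⟹ (ii). Let `k` be a field of characteristic
`p > 0` and `f ∈ k[x,y]`. If `f` is a variable, then there exists a locally finite
iterative higher `k`-derivation `D` on `k[x,y]` of Jacobian type determined by `f`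
with `k[x,y]^D = k[f]` which has a slice. -/
theorem stmt11 {k : Type u} [Field k] (p : ℕ) (hp : 0 < p) [CharP k p]
    (f : MvPolynomial (Fin 2) k) (hvar : IsVariable f) :
    ∃ hd : HigherDerivation k (MvPolynomial (Fin 2) k),
      hd.LocallyFinite ∧ hd.Iterative ∧ IsJacobianType p hd f ∧
      hd.kerSet = ↑(Algebra.adjoin k {f}) ∧
      ∃ s : MvPolynomial (Fin 2) k, hd.IsSlice s := by
  classical
  obtain ⟨g, hind, hadj⟩ := hvar
  have hinj : Function.Injective ⇑(MvPolynomial.aeval (R := k) ![f, g]) :=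
    algebraicIndependent_iff_injective_aeval.mp hind
  have hrange : Set.range ![f, g] = {f, g} := by
    ext z
    simp only [Set.mem_range, Fin.exists_fin_two, Matrix.cons_val_zero, Matrix.cons_val_one,
      Matrix.head_cons, Set.mem_insert_iff, Set.mem_singleton_iff, eq_comm]
  have hsurj : Function.Surjective ⇑(MvPolynomial.aeval (R := k) ![f, g]) := by
    rw [← AlgHom.range_eq_top, ← Algebra.adjoin_range_eq_range_aeval, hrange, hadj]
  let e : MvPolynomial (Fin 2) k ≃ₐ[k] MvPolynomial (Fin 2) k :=
    AlgEquiv.ofBijective (MvPolynomial.aeval ![f, g]) ⟨hinj, hsurj⟩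
  have he : ∀ q, e q = MvPolynomial.aeval ![f, g] q := fun _ => rfl
  have he0 : e (X 0) = f := by rw [he]; simp
  have he1 : e (X 1) = g := by rw [he]; simp
  have hs0 : e.symm f = X 0 := by rw [AlgEquiv.symm_apply_eq, he0]
  have hs1 : e.symm g = X 1 := by rw [AlgEquiv.symm_apply_eq, he1]
  have hq : ∀ (q : MvPolynomial (Fin 2) k) (m : Fin 2),
      pderiv m q = e (pderiv 0 (e.symm q)) * pderiv m f
        + e (pderiv 1 (e.symm q)) * pderiv m g := by
    intro q m
    have h := Stmt11.chain_rule ![f, g] m (e.symm q)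
    rw [show MvPolynomial.aeval ![f, g] (e.symm q) = q by
      rw [← he, e.apply_symm_apply]] at h
    simpa only [← he, Matrix.cons_val_zero, Matrix.cons_val_one, Matrix.head_cons] using h
  have E0x := hq (X 0) 0
  have E0y := hq (X 0) 1
  have E1x := hq (X 1) 0
  have E1y := hq (X 1) 1
  rw [pderiv_X_self] at E0x E1y
  rw [pderiv_X_of_ne (by decide)] at E0y
  rw [pderiv_X_of_ne (by decide)] at E1x
  have hu_unit : IsUnit (jacobianDeriv f g) := by
    apply IsUnit.of_mul_eq_one (a := jacobianDeriv f g)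
      (e (pderiv 0 (e.symm (X 0))) * e (pderiv 1 (e.symm (X 1)))
        - e (pderiv 1 (e.symm (X 0))) * e (pderiv 0 (e.symm (X 1))))
    rw [jacobianDeriv]
    linear_combination (-(e (pderiv 0 (e.symm (X 1))) * pderiv 1 f
        + e (pderiv 1 (e.symm (X 1))) * pderiv 1 g)) * E0x
      + (e (pderiv 0 (e.symm (X 1))) * pderiv 0 f
        + e (pderiv 1 (e.symm (X 1))) * pderiv 0 g) * E0y - E1y
  obtain ⟨c₀, hc₀unit, hc₀⟩ := Stmt11.isUnit_eq_C hu_unit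
  have heC : ∀ a : k, e (MvPolynomial.C a) = MvPolynomial.C a := by
    intro a
    rw [show (MvPolynomial.C a : MvPolynomial (Fin 2) k) = algebraMap k _ a from rfl]
    exact e.commutes a
  have hD1 : ∀ q, (Stmt11.hdOf e c₀).D 1 q = jacobianDeriv f q := by
    intro q
    rw [Stmt11.hdOf_D, pow_one, Stmt11.coeff_one_Phi, map_mul, heC, hc₀]
    simp only [jacobianDeriv]
    have hqx := hq q 0
    have hqy := hq q 1
    linear_combination (pderiv 1 f) * hqx - (pderiv 0 f) * hqy
  have hD0 : ∀ b, (Stmt11.hdOf e c₀).D 0 b = b := by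
    intro b
    rw [(Stmt11.hdOf e c₀).D_zero]
    rfl
  have hker : ∀ b : MvPolynomial (Fin 2) k,
      b ∈ (Stmt11.hdOf e c₀).kerSet ↔ b ∈ Algebra.adjoin k {f} := by
    intro b
    have hadj_map : Algebra.adjoin k {f}
        = Subalgebra.map e.toAlgHom (Algebra.adjoin k {(X 0 : MvPolynomial (Fin 2) k)}) := by
      rw [AlgHom.map_adjoin, Set.image_singleton,
        show e.toAlgHom (X 0) = f from he0]
    constructor
    · intro hb
      have hH : ∀ ℓ : ℕ, 1 ≤ ℓ → (Stmt11.Phi (e.symm b)).coeff ℓ = 0 := by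
        intro ℓ hℓ
        have h := hb ℓ hℓ
        rw [Stmt11.hdOf_D] at h
        have h2 : (MvPolynomial.C c₀) ^ ℓ * (Stmt11.Phi (e.symm b)).coeff ℓ = 0 := by
          apply e.injective
          rw [h, map_zero]
        have h3 : IsUnit ((MvPolynomial.C c₀ : MvPolynomial (Fin 2) k) ^ ℓ) :=
          (hc₀unit.map (MvPolynomial.C (σ := Fin 2) : k →+* MvPolynomial (Fin 2) k)).pow ℓ
        obtain ⟨v, hv⟩ := h3.exists_left_inv
        calc (Stmt11.Phi (e.symm b)).coeff ℓ
            = v * ((MvPolynomial.C c₀) ^ ℓ * (Stmt11.Phi (e.symm b)).coeff ℓ) := by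
              rw [← mul_assoc, hv, one_mul]
          _ = 0 := by rw [h2, mul_zero]
      have hPhi : Stmt11.Phi (e.symm b) = Polynomial.C (e.symm b) := by
        ext n
        rcases Nat.eq_zero_or_pos n with hn | hn
        · subst hn
          rw [Stmt11.coeff_zero_Phi, Polynomial.coeff_C_zero]
        · rw [hH n hn, Polynomial.coeff_C, if_neg (by omega)]
      have hmem : e.symm b ∈ Algebra.adjoin k {(X 0 : MvPolynomial (Fin 2) k)} := by
        have h := Stmt11.eval2_Phi (e.symm b)
        rw [hPhi, Polynomial.eval₂_C] at h
        have h2 := Stmt11.aeval_X0_zero_mem (e.symm b)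
        rw [show ((MvPolynomial.aeval (R := k)
          ![MvPolynomial.X 0, (0 : MvPolynomial (Fin 2) k)]).toRingHom (e.symm b))
            = MvPolynomial.aeval (R := k)
              ![MvPolynomial.X 0, (0 : MvPolynomial (Fin 2) k)] (e.symm b) from rfl] at h
        rw [h] at h2
        exact h2
      rw [hadj_map]
      exact ⟨e.symm b, hmem, e.apply_symm_apply b⟩
    · intro hb
      intro ℓ hℓ
      rw [hadj_map] at hb
      obtain ⟨q, hqmem, hqe⟩ := hb
      rw [Stmt11.hdOf_D, show e.symm b = q from by
        rw [← hqe]; exact e.symm_apply_apply q]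
      rw [Stmt11.Phi_adjoin hqmem, Polynomial.coeff_C, if_neg (by omega), mul_zero, map_zero]
  refine ⟨Stmt11.hdOf e c₀, Stmt11.hdOf_locallyFinite e c₀, Stmt11.hdOf_iterative e c₀,
    ⟨?_, ?_, hD1, ?_⟩, ?_, g, 1, le_refl 1, ?_, ?_, ?_, ?_⟩
  · -- f is not constant
    intro c hfc
    have hX : (X 0 : MvPolynomial (Fin 2) k) = MvPolynomial.C c := by
      apply hinj
      rw [show MvPolynomial.aeval (R := k) ![f, g] (X 0) = f by simp,
        show MvPolynomial.aeval (R := k) ![f, g] (MvPolynomial.C c) = MvPolynomial.C c by simp,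
        ← hfc]
    have h1 := congrArg MvPolynomial.totalDegree hX
    rw [MvPolynomial.totalDegree_X, MvPolynomial.totalDegree_C] at h1
    omega
  · -- f ∈ kernel
    intro ℓ hℓ
    rw [Stmt11.hdOf_D, hs0, Stmt11.Phi_X0, Polynomial.coeff_C, if_neg (by omega), mul_zero,
      map_zero]
  · -- factorials
    have hfact : ∀ (ℓ : ℕ) (q : MvPolynomial (Fin 2) k),
        ℓ.factorial • (Stmt11.hdOf e c₀).D ℓ q = (jacobianDeriv f)^[ℓ] q := by
      intro ℓ
      induction ℓ with
      | zero => intro q; simpa [Nat.factorial] using hD0 q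
      | succ n ih =>
        intro q
        rw [Function.iterate_succ_apply', ← ih q, ← hD1]
        rw [map_nsmul, Stmt11.hdOf_iterative e c₀ 1 n q]
        rw [smul_smul, show 1 + n = n + 1 from by omega, Nat.choose_succ_self_right,
          Nat.factorial_succ, Nat.mul_comm]
    intro ℓ _ q
    exact hfact ℓ q
  · -- kernel = adjoin {f}
    ext b
    exact hker b
  · -- D 1 g ≠ 0
    rw [hD1]
    have hgj : jacobianDeriv f g ≠ 0 := hu_unit.ne_zero
    exact hgj
  · -- D ℓ g = 0 for ℓ > 1
    intro ℓ hℓ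
    rw [Stmt11.hdOf_D, hs1, Stmt11.Phi_X1, Polynomial.coeff_add, Polynomial.coeff_C,
      if_neg (by omega), Polynomial.coeff_X, if_neg (by omega), add_zero, mul_zero, map_zero]
  · -- D 1 g is a unit
    rw [hD1]
    exact hu_unit
  · -- minimality
    intro b hb
    simp only [HigherDerivation.kerSet, Set.mem_setOf_eq] at hb
    push_neg at hb
    obtain ⟨m, hm1, hm2⟩ := hb
    exact ⟨m, hm1, hm2⟩
end

section
/- Let k be a field of characteristic p > 0 and let f ∈ k[x,y] with f ∉ k[x^p, y^p] (f does not lie in the k-subalgebra generated by x^p and y^p). If f is univariate (i.e. f ∈ k[g] for some variable g of k[x,y]), then there exists a locally finite iterative higher k-derivation (lfihd) D on k[x,y] of Jacobian type determined by f. -/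
open MvPolynomial

universe u


section AuxStmt13

variable {k : Type*} [CommRing k]

/-- Conjugate of a derivation by an algebra automorphism. -/
noncomputable def conjDerAux (Φ : MvPolynomial (Fin 2) k ≃ₐ[k] MvPolynomial (Fin 2) k)
    (d : Derivation k (MvPolynomial (Fin 2) k) (MvPolynomial (Fin 2) k)) :
    Derivation k (MvPolynomial (Fin 2) k) (MvPolynomial (Fin 2) k) :=
  Derivation.mk' (Φ.symm.toLinearMap ∘ₗ d.toLinearMap ∘ₗ Φ.toLinearMap) (by
    intro a b
    simp only [LinearMap.coe_comp, Function.comp_apply, AlgEquiv.toLinearMap_apply,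
      Derivation.coeFn_coe, map_mul]
    rw [d.leibniz]
    simp only [smul_eq_mul, map_add, map_mul, AlgEquiv.symm_apply_apply])

lemma conjDerAux_apply (Φ : MvPolynomial (Fin 2) k ≃ₐ[k] MvPolynomial (Fin 2) k)
    (d : Derivation k (MvPolynomial (Fin 2) k) (MvPolynomial (Fin 2) k))
    (b : MvPolynomial (Fin 2) k) :
    conjDerAux Φ d b = Φ.symm (d (Φ b)) := rfl

lemma derivDecompAux (d : Derivation k (MvPolynomial (Fin 2) k) (MvPolynomial (Fin 2) k))
    (q : MvPolynomial (Fin 2) k) :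
    d q = pderiv 0 q * d (X 0) + pderiv 1 q * d (X 1) := by
  have h : (d (X 0) • pderiv 0 + d (X 1) • pderiv 1 :
      Derivation k (MvPolynomial (Fin 2) k) (MvPolynomial (Fin 2) k)) = d := by
    apply MvPolynomial.derivation_ext
    intro i
    fin_cases i <;>
      simp [Derivation.add_apply, Derivation.smul_apply, pderiv_X, smul_eq_mul]
  have h2 : d q = (d (X 0) • pderiv 0 + d (X 1) • pderiv 1 :
      Derivation k (MvPolynomial (Fin 2) k) (MvPolynomial (Fin 2) k)) q := by rw [h]
  rw [h2]
  simp only [Derivation.add_apply, Derivation.smul_apply, smul_eq_mul]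
  ring

lemma chainRuleAux (Φ : MvPolynomial (Fin 2) k ≃ₐ[k] MvPolynomial (Fin 2) k)
    (d : Derivation k (MvPolynomial (Fin 2) k) (MvPolynomial (Fin 2) k))
    (q : MvPolynomial (Fin 2) k) :
    d (Φ q) = Φ (pderiv 0 q) * d (Φ (X 0)) + Φ (pderiv 1 q) * d (Φ (X 1)) := by
  have h := congrArg Φ (derivDecompAux (conjDerAux Φ d) q)
  simp only [conjDerAux_apply, map_add, map_mul, AlgEquiv.apply_symm_apply] at h
  exact h

end AuxStmt13

set_option maxHeartbeats 1000000 in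
/-- Corollary 3.2, (i) ⟹ (ii). Let `k` be a field of characteristic
`p > 0` and `f ∈ k[x,y]` with `f ∉ k[xᵖ, yᵖ]`. If `f` is univariate (i.e. `f ∈ k[g]`
for some variable `g`), then there exists a locally finite iterative higher
`k`-derivation on `k[x,y]` of Jacobian type determined by `f`. -/
theorem stmt13 {k : Type u} [Field k] (p : ℕ) (hp : 0 < p) [CharP k p]
    (f : MvPolynomial (Fin 2) k)
    (hnp : f ∉ Algebra.adjoin k
      {(X 0 ^ p : MvPolynomial (Fin 2) k), (X 1 ^ p : MvPolynomial (Fin 2) k)})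
    (huni : ∃ g : MvPolynomial (Fin 2) k,
      IsVariable g ∧ f ∈ Algebra.adjoin k {g}) :
    ∃ hd : HigherDerivation k (MvPolynomial (Fin 2) k),
      hd.LocallyFinite ∧ hd.Iterative ∧ IsJacobianType p hd f := by
  classical
  obtain ⟨g, ⟨h, hind, hadj⟩, hfmem⟩ := huni
  rw [Algebra.adjoin_singleton_eq_range_aeval] at hfmem
  obtain ⟨Q, hQ0⟩ := hfmem
  have hQ : Polynomial.aeval g Q = f := hQ0
  -- the automorphism sending X 0 ↦ h, X 1 ↦ g
  have hswap : (MvPolynomial.aeval ![h, g] :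
        MvPolynomial (Fin 2) k →ₐ[k] MvPolynomial (Fin 2) k)
      = (MvPolynomial.aeval ![g, h]).comp (MvPolynomial.aeval ![X 1, X 0]) := by
    apply MvPolynomial.algHom_ext; intro i; fin_cases i <;> simp
  have hss : ((MvPolynomial.aeval ![(X 1 : MvPolynomial (Fin 2) k), X 0]).comp
      (MvPolynomial.aeval ![(X 1 : MvPolynomial (Fin 2) k), X 0])) = AlgHom.id k _ := by
    apply MvPolynomial.algHom_ext; intro i; fin_cases i <;> simp
  have hswapinj :
      Function.Injective (MvPolynomial.aeval (R := k) ![(X 1 : MvPolynomial (Fin 2) k), X 0]) := by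
    apply Function.LeftInverse.injective
      (g := MvPolynomial.aeval (R := k) ![(X 1 : MvPolynomial (Fin 2) k), X 0])
    intro q
    simpa using DFunLike.congr_fun hss q
  have hinj : Function.Injective (MvPolynomial.aeval (R := k) ![h, g]) := by
    rw [hswap, AlgHom.coe_comp]
    exact (algebraicIndependent_iff_injective_aeval.mp hind).comp hswapinj
  have hrange : Set.range ![h, g] = {g, h} := by
    ext b
    simp only [Set.mem_insert_iff, Set.mem_singleton_iff, Set.mem_range]
    constructor
    · rintro ⟨i, rfl⟩; fin_cases i <;> simp
    · rintro (rfl | rfl)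
      exacts [⟨1, rfl⟩, ⟨0, rfl⟩]
  have hsurj : Function.Surjective (MvPolynomial.aeval (R := k) ![h, g]) := by
    intro b
    have hb : b ∈ (MvPolynomial.aeval (R := k) ![h, g]).range := by
      rw [← Algebra.adjoin_range_eq_range_aeval, hrange, hadj]
      trivial
    obtain ⟨q, hq⟩ := hb
    exact ⟨q, hq⟩
  let Φ : MvPolynomial (Fin 2) k ≃ₐ[k] MvPolynomial (Fin 2) k :=
    AlgEquiv.ofBijective (MvPolynomial.aeval ![h, g]) ⟨hinj, hsurj⟩
  have hΦ0 : Φ (X 0) = h := by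
    show MvPolynomial.aeval ![h, g] (X 0) = h
    simp
  have hΦ1 : Φ (X 1) = g := by
    show MvPolynomial.aeval ![h, g] (X 1) = g
    simp
  let Ψ := MvPolynomial.finSuccEquiv k 1
  let Θ : MvPolynomial (Fin 2) k ≃ₐ[k] Polynomial (MvPolynomial (Fin 1) k) := Φ.symm.trans Ψ
  have hΘ : ∀ b, Θ b = Ψ (Φ.symm b) := fun _ => rfl
  have hΘh : Θ h = Polynomial.X := by
    rw [hΘ, ← hΦ0, AlgEquiv.symm_apply_apply]
    exact MvPolynomial.finSuccEquiv_X_zero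
  have hΘg : Θ g = Polynomial.C (X 0) := by
    rw [hΘ, ← hΦ1, AlgEquiv.symm_apply_apply]
    exact MvPolynomial.finSuccEquiv_X_succ (j := 0)
  have hconst : ∀ P : Polynomial k, Θ (Polynomial.aeval g P)
      = Polynomial.C (Polynomial.aeval (X 0 : MvPolynomial (Fin 1) k) P) := by
    intro P
    have h2 := Polynomial.aeval_algHom_apply
      (IsScalarTower.toAlgHom k (MvPolynomial (Fin 1) k)
        (Polynomial (MvPolynomial (Fin 1) k))) (X 0) P
    simp only [IsScalarTower.coe_toAlgHom', Polynomial.algebraMap_eq] at h2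
    calc Θ (Polynomial.aeval g P) = Polynomial.aeval (Θ g) P :=
          (Polynomial.aeval_algHom_apply Θ.toAlgHom g P).symm
      _ = Polynomial.aeval (Polynomial.C (X 0 : MvPolynomial (Fin 1) k)) P := by rw [hΘg]
      _ = Polynomial.C (Polynomial.aeval (X 0 : MvPolynomial (Fin 1) k) P) := h2
  -- chain rule for f = Q(g)
  have hpf : ∀ (d : Derivation k (MvPolynomial (Fin 2) k) (MvPolynomial (Fin 2) k)),
      d f = Polynomial.aeval g Q.derivative * d g := by
    intro d
    rw [← hQ, Derivation.map_aeval, smul_eq_mul]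
  -- the Jacobian of (g, h) is a unit
  have hchain : ∀ (d : Derivation k (MvPolynomial (Fin 2) k) (MvPolynomial (Fin 2) k))
      (q : MvPolynomial (Fin 2) k),
      d (Φ q) = Φ (pderiv 0 q) * d h + Φ (pderiv 1 q) * d g := by
    intro d q
    rw [chainRuleAux Φ d q, hΦ0, hΦ1]
  set q0 := Φ.symm (X 0) with hq0
  set q1 := Φ.symm (X 1) with hq1
  have hΦq0 : Φ q0 = X 0 := AlgEquiv.apply_symm_apply Φ _
  have hΦq1 : Φ q1 = X 1 := AlgEquiv.apply_symm_apply Φ _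
  have E1 : Φ (pderiv 0 q0) * pderiv 0 h + Φ (pderiv 1 q0) * pderiv 0 g = 1 := by
    have h' := hchain (pderiv 0) q0
    rw [hΦq0] at h'
    simpa using h'.symm
  have E2 : Φ (pderiv 0 q0) * pderiv 1 h + Φ (pderiv 1 q0) * pderiv 1 g = 0 := by
    have h' := hchain (pderiv 1) q0
    rw [hΦq0] at h'
    simpa using h'.symm
  have E3 : Φ (pderiv 0 q1) * pderiv 0 h + Φ (pderiv 1 q1) * pderiv 0 g = 0 := by
    have h' := hchain (pderiv 0) q1
    rw [hΦq1] at h'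
    simpa using h'.symm
  have E4 : Φ (pderiv 0 q1) * pderiv 1 h + Φ (pderiv 1 q1) * pderiv 1 g = 1 := by
    have h' := hchain (pderiv 1) q1
    rw [hΦq1] at h'
    simpa using h'.symm
  have hJu : IsUnit (jacobianDeriv g h) := by
    apply IsUnit.of_mul_eq_one
      (Φ (pderiv 1 q0) * Φ (pderiv 0 q1) - Φ (pderiv 0 q0) * Φ (pderiv 1 q1))
    unfold jacobianDeriv
    linear_combination (Φ (pderiv 0 q1) * pderiv 1 h + Φ (pderiv 1 q1) * pderiv 1 g) * E1
      + E4 - (Φ (pderiv 0 q1) * pderiv 0 h + Φ (pderiv 1 q1) * pderiv 0 g) * E2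
  obtain ⟨r, -, hr⟩ := Polynomial.isUnit_iff.mp (hJu.map Θ)
  have hu : jacobianDeriv f h = Polynomial.aeval g Q.derivative * jacobianDeriv g h := by
    unfold jacobianDeriv
    rw [hpf (pderiv 0), hpf (pderiv 1)]
    ring
  obtain ⟨a, ha⟩ : ∃ a, Θ (jacobianDeriv f h) = Polynomial.C a := by
    refine ⟨Polynomial.aeval (X 0 : MvPolynomial (Fin 1) k) Q.derivative * r, ?_⟩
    rw [hu, map_mul, hconst, ← hr, ← map_mul]
  -- the higher derivation
  let Dl : ℕ → MvPolynomial (Fin 2) k →ₗ[k] MvPolynomial (Fin 2) k := fun ℓ =>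
    Θ.symm.toLinearMap ∘ₗ
      ((((LinearMap.mulLeft (MvPolynomial (Fin 1) k) ((Polynomial.C a) ^ ℓ)).comp
        (Polynomial.hasseDeriv ℓ)).restrictScalars k) ∘ₗ Θ.toLinearMap)
  have hD : ∀ ℓ b, Dl ℓ b
      = Θ.symm ((Polynomial.C a) ^ ℓ * Polynomial.hasseDeriv ℓ (Θ b)) := fun ℓ b => rfl
  have hCmul : ∀ (n : ℕ) (s : MvPolynomial (Fin 1) k) (q : Polynomial (MvPolynomial (Fin 1) k)),
      Polynomial.hasseDeriv n (Polynomial.C s * q)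
        = Polynomial.C s * Polynomial.hasseDeriv n q := by
    intro n s q
    rw [← Polynomial.smul_eq_C_mul, map_smul, Polynomial.smul_eq_C_mul]
  have hD1' : ∀ b, Dl 1 b
      = Θ.symm (Polynomial.C a * Polynomial.derivative (Θ b)) := by
    intro b
    rw [hD, pow_one, Polynomial.hasseDeriv_one']
  -- D 1 is the Jacobian derivation determined by f
  have hleib1 : ∀ x y : MvPolynomial (Fin 2) k,
      Dl 1 (x * y) = x • Dl 1 y + y • Dl 1 x := by
    intro x y
    have key : Polynomial.C a * Polynomial.derivative (Θ x * Θ y)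
        = Θ x * (Polynomial.C a * Polynomial.derivative (Θ y))
          + Θ y * (Polynomial.C a * Polynomial.derivative (Θ x)) := by
      rw [Polynomial.derivative_mul]; ring
    have lhs : Θ (Dl 1 (x * y)) = Polynomial.C a * Polynomial.derivative (Θ x * Θ y) := by
      rw [hD1' (x * y), AlgEquiv.apply_symm_apply, map_mul Θ x y]
    have rhs : Θ (x • Dl 1 y + y • Dl 1 x)
        = Θ x * (Polynomial.C a * Polynomial.derivative (Θ y))
          + Θ y * (Polynomial.C a * Polynomial.derivative (Θ x)) := by
      rw [hD1' y, hD1' x, smul_eq_mul, smul_eq_mul, map_add, map_mul,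
        AlgEquiv.apply_symm_apply, map_mul, AlgEquiv.apply_symm_apply]
    apply Θ.injective
    rw [lhs, rhs, Polynomial.derivative_mul]
    ring
  let d1 : Derivation k (MvPolynomial (Fin 2) k) (MvPolynomial (Fin 2) k) :=
    Derivation.mk' (Dl 1) hleib1
  let d2 : Derivation k (MvPolynomial (Fin 2) k) (MvPolynomial (Fin 2) k) :=
    pderiv 0 f • pderiv 1 - pderiv 1 f • pderiv 0
  have hd2 : ∀ b, d2 b = jacobianDeriv f b := by
    intro b
    simp only [d2, Derivation.sub_apply, Derivation.smul_apply, smul_eq_mul, jacobianDeriv]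
  have hd1h : d1 h = jacobianDeriv f h := by
    show Dl 1 h = _
    rw [hD1', hΘh, Polynomial.derivative_X, mul_one, ← ha, AlgEquiv.symm_apply_apply]
  have hd1g : d1 g = jacobianDeriv f g := by
    have hz : jacobianDeriv f g = 0 := by
      unfold jacobianDeriv
      rw [hpf (pderiv 0), hpf (pderiv 1)]
      ring
    show Dl 1 g = _
    rw [hD1', hΘg, Polynomial.derivative_C, mul_zero, map_zero, hz]
  have hext : conjDerAux Φ d1 = conjDerAux Φ d2 := by
    apply MvPolynomial.derivation_ext
    intro i
    fin_cases i
    · show Φ.symm (d1 (Φ (X 0))) = Φ.symm (d2 (Φ (X 0)))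
      rw [hΦ0, hd1h, hd2]
    · show Φ.symm (d1 (Φ (X 1))) = Φ.symm (d2 (Φ (X 1)))
      rw [hΦ1, hd1g, hd2]
  have hD1 : ∀ b, Dl 1 b = jacobianDeriv f b := by
    intro b
    have h' : conjDerAux Φ d1 (Φ.symm b) = conjDerAux Φ d2 (Φ.symm b) := by rw [hext]
    rw [conjDerAux_apply, conjDerAux_apply, AlgEquiv.apply_symm_apply] at h'
    have h'' := Φ.symm.injective h'
    rw [hd2] at h''
    exact h''
  -- iterates of D 1
  have hDer : ∀ (n : ℕ) (q : Polynomial (MvPolynomial (Fin 1) k)),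
      Polynomial.derivative ((Polynomial.C a) ^ n * q)
        = (Polynomial.C a) ^ n * Polynomial.derivative q := by
    intro n q
    rw [← map_pow Polynomial.C a n, ← Polynomial.smul_eq_C_mul, map_smul,
      Polynomial.smul_eq_C_mul, map_pow Polynomial.C a n]
  have hiter : ∀ (n : ℕ) (b : MvPolynomial (Fin 2) k),
      (jacobianDeriv f)^[n] b
        = Θ.symm ((Polynomial.C a) ^ n * (⇑Polynomial.derivative)^[n] (Θ b)) := by
    intro n
    induction n with
    | zero => intro b; simp
    | succ n ih =>
      intro b
      rw [Function.iterate_succ_apply', ih, ← hD1, hD1', AlgEquiv.apply_symm_apply, hDer]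
      congr 1
      rw [← mul_assoc, ← pow_succ']
      congr 1
      exact (Function.iterate_succ_apply' _ _ _).symm
  refine ⟨⟨Dl, ?_, ?_⟩, ?_, ?_, ?_, ?_, ?_, ?_⟩
  · -- D_zero
    apply LinearMap.ext
    intro b
    rw [hD]
    simp [Polynomial.hasseDeriv_zero']
  · -- leibniz
    intro ℓ x y
    rw [hD, map_mul Θ x y, Polynomial.hasseDeriv_mul, Finset.mul_sum, map_sum]
    apply Finset.sum_congr rfl
    intro ij hij
    rw [Finset.HasAntidiagonal.mem_antidiagonal] at hij
    rw [hD, hD, ← map_mul]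
    refine congrArg Θ.symm ?_
    rw [← hij, pow_add]
    ring
  · -- LocallyFinite
    intro b
    refine ⟨(Θ b).natDegree + 1, fun ℓ hℓ => ?_⟩
    rw [hD, Polynomial.hasseDeriv_eq_zero_of_lt_natDegree _ _ (by omega), mul_zero, map_zero]
  · -- Iterative
    intro i j b
    show Dl i (Dl j b) = (i + j).choose j • Dl (i + j) b
    rw [hD, hD, hD, AlgEquiv.apply_symm_apply]
    have hcomp : Polynomial.hasseDeriv i (Polynomial.hasseDeriv j (Θ b))
        = (i + j).choose i • Polynomial.hasseDeriv (i + j) (Θ b) := by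
      have := LinearMap.congr_fun (Polynomial.hasseDeriv_comp
        (R := MvPolynomial (Fin 1) k) i j) (Θ b)
      simp only [LinearMap.coe_comp, Function.comp_apply, LinearMap.smul_apply] at this
      exact this
    rw [← map_pow Polynomial.C a j, hCmul, hcomp,
      ← map_nsmul Θ.symm ((i + j).choose j)]
    congr 1
    rw [Nat.choose_symm_add, mul_smul_comm, mul_smul_comm]
    congr 1
    rw [← mul_assoc, map_pow Polynomial.C a j, ← pow_add]
  · -- f non-constant
    intro c hc
    apply hnp
    rw [hc, ← MvPolynomial.algebraMap_eq]
    exact Subalgebra.algebraMap_mem _ c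
  · -- f ∈ kerSet
    intro ℓ hℓ
    show Dl ℓ f = 0
    have hf : Θ f = Polynomial.C (Polynomial.aeval (X 0 : MvPolynomial (Fin 1) k) Q) := by
      rw [← hQ]; exact hconst Q
    rw [hD, hf, Polynomial.hasseDeriv_C ℓ _ hℓ, mul_zero, map_zero]
  · -- D 1 = Δ_f
    exact hD1
  · -- ℓ! • D ℓ = Δ_f^[ℓ]
    intro ℓ hℓ b
    rw [hiter ℓ b, hD, ← map_nsmul Θ.symm ℓ.factorial]
    congr 1
    have hfac := congrFun
      (Polynomial.factorial_smul_hasseDeriv (R := MvPolynomial (Fin 1) k) ℓ) (Θ b)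
    simp only [LinearMap.smul_apply] at hfac
    rw [← hfac, mul_smul_comm]
end
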